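/- arXiv:2101.07838 — 8 statements merged into one kernel-verified Lean document; each statement's English description precedes it below -/
import Mathlib

section
/- Let G be a finite group and let H and K be CD-subgroups of G. Then the set product HK equals KH; in particular, HK is a subgroup of G. -/
open Pointwise

/-- The Chermak–Delgado index-measure of a subgroup `H` of `G`:
`m(G,H) = |G:H| * |G:C_G(H)|`. -/
noncomputable def cdMeasure {G : Type*} [Group G] (H : Subgroup G) : ℕ :=
  H.index * (Subgroup.centralizer (H : Set G)).index

/-- `μ(G)`, the minimum of `m(G,H)` over all subgroups `H ≤ G`. -/
noncomputable def cdMu (G : Type*) [Group G] : ℕ :=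
  sInf {n : ℕ | ∃ H : Subgroup G, cdMeasure H = n}

/-- A subgroup `H ≤ G` is a CD-subgroup if `m(G,H) = μ(G)`. -/
def IsCDSubgroup {G : Type*} [Group G] (H : Subgroup G) : Prop :=
  cdMeasure H = cdMu G

section CDAux

variable {G : Type*} [Group G]

lemma cd_centralizer_sup (H K : Subgroup G) :
    Subgroup.centralizer (↑(H ⊔ K) : Set G) =
      Subgroup.centralizer (H : Set G) ⊓ Subgroup.centralizer (K : Set G) := by
  apply le_antisymm
  · exact le_inf (Subgroup.centralizer_le (SetLike.coe_subset_coe.mpr le_sup_left))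
      (Subgroup.centralizer_le (SetLike.coe_subset_coe.mpr le_sup_right))
  · intro x hx
    rw [Subgroup.mem_centralizer_iff]
    intro h hh
    have hle : (H ⊔ K : Subgroup G) ≤ Subgroup.centralizer {x} := by
      rw [sup_le_iff]
      constructor
      · intro g hg
        rw [Subgroup.mem_centralizer_singleton_iff]
        exact hx.1 g hg
      · intro g hg
        rw [Subgroup.mem_centralizer_singleton_iff]
        exact hx.2 g hg
    exact Subgroup.mem_centralizer_singleton_iff.mp (hle hh)

lemma cd_card_image (H K : Subgroup G) :
    Nat.card (((↑) : G → G ⧸ K) '' (H : Set G) : Set (G ⧸ K))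
      = Nat.card (H ⧸ K.subgroupOf H) := by
  refine Nat.card_congr (Equiv.symm (Equiv.ofBijective
    (fun q => Quotient.liftOn' q
      (fun h : H => (⟨((h : G) : G ⧸ K), ⟨(h : G), h.2, rfl⟩⟩ :
        (((↑) : G → G ⧸ K) '' (H : Set G) : Set (G ⧸ K))))
      ?_) ⟨?_, ?_⟩))
  · intro a b hab
    have h1 : a⁻¹ * b ∈ K.subgroupOf H := (QuotientGroup.leftRel_apply).mp hab
    have h2 : (a : G)⁻¹ * (b : G) ∈ K := h1
    exact Subtype.ext ((QuotientGroup.eq).mpr h2)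
  · intro a b
    induction a using Quotient.inductionOn'
    induction b using Quotient.inductionOn'
    intro hab
    rename_i a b
    have h2 : ((a : G) : G ⧸ K) = ((b : G) : G ⧸ K) := congrArg Subtype.val hab
    have h3 : (a : G)⁻¹ * (b : G) ∈ K := (QuotientGroup.eq).mp h2
    exact Quotient.sound' ((QuotientGroup.leftRel_apply).mpr h3)
  · rintro ⟨-, g, hg, rfl⟩
    exact ⟨Quotient.mk'' ⟨g, hg⟩, rfl⟩

lemma cd_card_mul_inf [Finite G] (H K : Subgroup G) :
    Nat.card (↑H * ↑K : Set G) * Nat.card (H ⊓ K : Subgroup G)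
      = Nat.card H * Nat.card K := by
  have h1 := Subgroup.card_mul_eq_card_subgroup_mul_card_quotient K (↑H : Set G)
  have h2 := cd_card_image H K
  have h3 := Subgroup.card_eq_card_quotient_mul_card_subgroup (K.subgroupOf H)
  have h4 : Nat.card (K.subgroupOf H) = Nat.card (H ⊓ K : Subgroup G) := by
    rw [inf_comm, ← Subgroup.inf_subgroupOf_right K H]
    exact Nat.card_congr (Subgroup.subgroupOfEquivOfLe inf_le_right).toEquiv
  calc Nat.card (↑H * ↑K : Set G) * Nat.card (H ⊓ K : Subgroup G)
      = (Nat.card K * Nat.card (H ⧸ K.subgroupOf H)) * Nat.card (K.subgroupOf H) := by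
        rw [h1, h2, h4]
    _ = Nat.card K * (Nat.card (H ⧸ K.subgroupOf H) * Nat.card (K.subgroupOf H)) := by ring
    _ = Nat.card K * Nat.card H := by rw [← h3]
    _ = Nat.card H * Nat.card K := mul_comm _ _

lemma cd_set_mul_subset_sup (H K : Subgroup G) :
    (↑H * ↑K : Set G) ⊆ (↑(H ⊔ K) : Set G) := by
  rw [Subgroup.sup_eq_closure_mul]
  exact Subgroup.subset_closure

lemma cd_card_key [Finite G] (H K : Subgroup G) :
    Nat.card H * Nat.card K ≤ Nat.card (H ⊔ K : Subgroup G) * Nat.card (H ⊓ K : Subgroup G) := by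
  rw [← cd_card_mul_inf H K]
  exact Nat.mul_le_mul_right _ (Nat.card_mono (Set.toFinite _) (cd_set_mul_subset_sup H K))

lemma cd_index_key [Finite G] (H K : Subgroup G) :
    (H ⊔ K).index * (H ⊓ K).index ≤ H.index * K.index := by
  have hpos : 0 < Nat.card H * Nat.card K :=
    Nat.mul_pos Nat.card_pos Nat.card_pos
  refine Nat.le_of_mul_le_mul_right ?_ hpos
  have h1 : ((H ⊔ K).index * (H ⊓ K).index) * (Nat.card (H ⊔ K : Subgroup G) * Nat.card (H ⊓ K : Subgroup G)) = Nat.card G * Nat.card G := by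
    rw [mul_mul_mul_comm, mul_comm (H ⊔ K).index, mul_comm (H ⊓ K).index,
      Subgroup.card_mul_index, Subgroup.card_mul_index]
  have h2 : (H.index * K.index) * (Nat.card H * Nat.card K) = Nat.card G * Nat.card G := by
    rw [mul_mul_mul_comm, mul_comm H.index, mul_comm K.index,
      Subgroup.card_mul_index, Subgroup.card_mul_index]
  calc ((H ⊔ K).index * (H ⊓ K).index) * (Nat.card H * Nat.card K)
      ≤ ((H ⊔ K).index * (H ⊓ K).index) * (Nat.card (H ⊔ K : Subgroup G) * Nat.card (H ⊓ K : Subgroup G)) :=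
        Nat.mul_le_mul_left _ (cd_card_key H K)
    _ = Nat.card G * Nat.card G := h1
    _ = (H.index * K.index) * (Nat.card H * Nat.card K) := h2.symm

lemma cd_card_of_index_eq [Finite G] (H K : Subgroup G)
    (h : (H ⊔ K).index * (H ⊓ K).index = H.index * K.index) :
    Nat.card (H ⊔ K : Subgroup G) * Nat.card (H ⊓ K : Subgroup G)
      = Nat.card H * Nat.card K := by
  have hpos : 0 < H.index * K.index :=
    Nat.mul_pos (Nat.pos_of_ne_zero Subgroup.index_ne_zero_of_finite)
      (Nat.pos_of_ne_zero Subgroup.index_ne_zero_of_finite)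
  refine Nat.eq_of_mul_eq_mul_left hpos ?_
  have h1 : ((H ⊔ K).index * (H ⊓ K).index) * (Nat.card (H ⊔ K : Subgroup G) * Nat.card (H ⊓ K : Subgroup G)) = Nat.card G * Nat.card G := by
    rw [mul_mul_mul_comm, mul_comm (H ⊔ K).index, mul_comm (H ⊓ K).index,
      Subgroup.card_mul_index, Subgroup.card_mul_index]
  have h2 : (H.index * K.index) * (Nat.card H * Nat.card K) = Nat.card G * Nat.card G := by
    rw [mul_mul_mul_comm, mul_comm H.index, mul_comm K.index,
      Subgroup.card_mul_index, Subgroup.card_mul_index]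
  rw [h] at h1
  exact h1.trans h2.symm

lemma cd_mul_eq_sup [Finite G] (H K : Subgroup G)
    (h : Nat.card (H ⊔ K : Subgroup G) * Nat.card (H ⊓ K : Subgroup G)
      = Nat.card H * Nat.card K) :
    (↑H * ↑K : Set G) = (↑(H ⊔ K) : Set G) := by
  have h2 : Nat.card (↑H * ↑K : Set G) = Nat.card (H ⊔ K : Subgroup G) := by
    have h3 := cd_card_mul_inf H K
    rw [← h] at h3
    exact Nat.eq_of_mul_eq_mul_right Nat.card_pos h3
  refine Set.eq_of_subset_of_ncard_le (cd_set_mul_subset_sup H K) ?_ (Set.toFinite _)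
  rw [← Nat.card_coe_set_eq, ← Nat.card_coe_set_eq, h2]
  exact le_of_eq (Nat.card_congr (Equiv.setCongr rfl))

end CDAux

theorem stmt_0 {G : Type*} [Group G] [Finite G] (H K : Subgroup G)
    (hH : IsCDSubgroup H) (hK : IsCDSubgroup K) :
    (H : Set G) * (K : Set G) = (K : Set G) * (H : Set G) ∧
      ∃ S : Subgroup G, (S : Set G) = (H : Set G) * (K : Set G) := by
  have hle : ∀ J : Subgroup G, cdMu G ≤ cdMeasure J := fun J => Nat.sInf_le ⟨J, rfl⟩
  set cH := Subgroup.centralizer (H : Set G) with hcH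
  set cK := Subgroup.centralizer (K : Set G) with hcK
  set cS := Subgroup.centralizer (↑(H ⊔ K) : Set G) with hcS
  set cI := Subgroup.centralizer (↑(H ⊓ K) : Set G) with hcI
  have hA : (H ⊔ K).index * (H ⊓ K).index ≤ H.index * K.index := cd_index_key H K
  have hB : cS.index * cI.index ≤ cH.index * cK.index := by
    have hc1 : cH ⊔ cK ≤ cI :=
      sup_le (Subgroup.centralizer_le (SetLike.coe_subset_coe.mpr inf_le_left))
        (Subgroup.centralizer_le (SetLike.coe_subset_coe.mpr inf_le_right))
    have hB1 : cI.index ≤ (cH ⊔ cK).index := Subgroup.index_antitone hc1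
    calc cS.index * cI.index ≤ cS.index * (cH ⊔ cK).index :=
          Nat.mul_le_mul_left _ hB1
      _ = (cH ⊔ cK).index * (cH ⊓ cK).index := by rw [hcS, cd_centralizer_sup]; ring
      _ ≤ cH.index * cK.index := cd_index_key cH cK
  have hm1 : cdMu G ≤ cdMeasure (H ⊔ K) := hle _
  have hm2 : cdMu G ≤ cdMeasure (H ⊓ K) := hle _
  have hμ2 : cdMu G * cdMu G = cdMeasure H * cdMeasure K := by rw [hH, hK]
  have hprod : cdMeasure (H ⊔ K) * cdMeasure (H ⊓ K) ≤ cdMu G * cdMu G := by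
    rw [hμ2]
    unfold cdMeasure
    calc (H ⊔ K).index * cS.index * ((H ⊓ K).index * cI.index)
        = ((H ⊔ K).index * (H ⊓ K).index) * (cS.index * cI.index) := by ring
      _ ≤ (H.index * K.index) * (cH.index * cK.index) := Nat.mul_le_mul hA hB
      _ = H.index * cH.index * (K.index * cK.index) := by ring
  have heq : cdMeasure (H ⊔ K) * cdMeasure (H ⊓ K) = cdMu G * cdMu G :=
    le_antisymm hprod (Nat.mul_le_mul hm1 hm2)
  -- extract equality of the index bracket
  have hApos : 0 < H.index * K.index :=
    Nat.mul_pos (Nat.pos_of_ne_zero Subgroup.index_ne_zero_of_finite)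
      (Nat.pos_of_ne_zero Subgroup.index_ne_zero_of_finite)
  have hBpos : 0 < cS.index * cI.index :=
    Nat.mul_pos (Nat.pos_of_ne_zero Subgroup.index_ne_zero_of_finite)
      (Nat.pos_of_ne_zero Subgroup.index_ne_zero_of_finite)
  have hAB : ((H ⊔ K).index * (H ⊓ K).index) * (cS.index * cI.index)
      = (H.index * K.index) * (cH.index * cK.index) := by
    have e1 : cdMeasure (H ⊔ K) * cdMeasure (H ⊓ K)
        = ((H ⊔ K).index * (H ⊓ K).index) * (cS.index * cI.index) := by
      unfold cdMeasure; rw [← hcS, ← hcI]; ring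
    have e2 : cdMu G * cdMu G = (H.index * K.index) * (cH.index * cK.index) := by
      rw [hμ2]; unfold cdMeasure; rw [← hcH, ← hcK]; ring
    rw [← e1, ← e2, heq]
  have hAeq : (H ⊔ K).index * (H ⊓ K).index = H.index * K.index := by
    -- first: cH.index * cK.index ≤ cS.index * cI.index
    have h1 : (H.index * K.index) * (cH.index * cK.index)
        ≤ (H.index * K.index) * (cS.index * cI.index) := by
      calc (H.index * K.index) * (cH.index * cK.index)
          = ((H ⊔ K).index * (H ⊓ K).index) * (cS.index * cI.index) := hAB.symm
        _ ≤ (H.index * K.index) * (cS.index * cI.index) :=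
            Nat.mul_le_mul_right _ hA
    have h2 : cH.index * cK.index ≤ cS.index * cI.index :=
      Nat.le_of_mul_le_mul_left h1 hApos
    have h3 : cS.index * cI.index = cH.index * cK.index := le_antisymm hB h2
    rw [h3] at hAB
    have hCpos : 0 < cH.index * cK.index :=
      Nat.mul_pos (Nat.pos_of_ne_zero Subgroup.index_ne_zero_of_finite)
        (Nat.pos_of_ne_zero Subgroup.index_ne_zero_of_finite)
    exact Nat.eq_of_mul_eq_mul_right hCpos hAB
  have hcard : Nat.card (H ⊔ K : Subgroup G) * Nat.card (H ⊓ K : Subgroup G)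
      = Nat.card H * Nat.card K := cd_card_of_index_eq H K hAeq
  have hHK : (↑H * ↑K : Set G) = (↑(H ⊔ K) : Set G) := cd_mul_eq_sup H K hcard
  have hcard' : Nat.card (K ⊔ H : Subgroup G) * Nat.card (K ⊓ H : Subgroup G)
      = Nat.card K * Nat.card H := by
    rw [sup_comm, inf_comm, hcard, mul_comm]
  have hKH : (↑K * ↑H : Set G) = (↑(K ⊔ H) : Set G) := cd_mul_eq_sup K H hcard'
  constructor
  · rw [hHK, hKH, sup_comm]
  · exact ⟨H ⊔ K, hHK.symm⟩
end

section
/- Let G be a finite group and let H and K be CD-subgroups of G. Then C_G(H ∩ K) = C_G(H)·C_G(K), i.e., the centralizer of the intersection H ∩ K equals the set product of the centralizers of H and of K. -/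
open Pointwise

lemma CD.fiber_card {G : Type*} [Group G] (A B : Subgroup G)
    (z : ↑((A : Set G) * (B : Set G))) :
    Nat.card {p : A × B // (p.1 : G) * p.2 = z} = Nat.card (A ⊓ B : Subgroup G) := by
  refine Nat.card_congr (Nonempty.some ?_)
  obtain ⟨a₀, ha₀, b₀, hb₀, hab⟩ := Set.mem_mul.mp z.2
  refine ⟨
  { toFun := fun p => ⟨a₀⁻¹ * (p.1.1 : G), ⟨mul_mem (A.inv_mem ha₀) p.1.1.2, ?_⟩⟩
    invFun := fun c => ⟨(⟨a₀ * c, A.mul_mem ha₀ c.2.1⟩,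
      ⟨(c : G)⁻¹ * b₀, B.mul_mem (B.inv_mem c.2.2) hb₀⟩), ?_⟩
    left_inv := ?_
    right_inv := ?_ }⟩
  · have h1 : (p.1.1 : G) * p.1.2 = a₀ * b₀ := by rw [p.2, hab]
    have hb : b₀ = a₀⁻¹ * ((p.1.1 : G) * p.1.2) := by rw [h1, inv_mul_cancel_left]
    have : a₀⁻¹ * (p.1.1 : G) = b₀ * (p.1.2 : G)⁻¹ := by rw [hb]; group
    rw [this]
    exact B.mul_mem hb₀ (B.inv_mem p.1.2.2)
  · show a₀ * (c : G) * ((c : G)⁻¹ * b₀) = z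
    rw [← hab]; group
  · rintro ⟨⟨a, b⟩, hp⟩
    have h1 : (a : G) * b = a₀ * b₀ := by rw [hab]; exact hp
    refine Subtype.ext (Prod.ext (Subtype.ext ?_) (Subtype.ext ?_))
    · show a₀ * (a₀⁻¹ * (a : G)) = a
      rw [mul_inv_cancel_left]
    · show (a₀⁻¹ * (a : G))⁻¹ * b₀ = b
      rw [mul_inv_rev, inv_inv, mul_assoc, ← h1, inv_mul_cancel_left]
  · rintro ⟨c, hc⟩
    refine Subtype.ext ?_
    show a₀⁻¹ * (a₀ * c) = c
    rw [inv_mul_cancel_left]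

/-- `|A·B| · |A ⊓ B| = |A| · |B|` for subgroups of a finite group. -/
lemma CD.card_mul_mul_card_inf {G : Type*} [Group G] [Finite G] (A B : Subgroup G) :
    Nat.card ↑((A : Set G) * (B : Set G)) * Nat.card (A ⊓ B : Subgroup G) =
      Nat.card A * Nat.card B := by
  classical
  have := Fintype.ofFinite G
  let f : A × B → ↑((A : Set G) * (B : Set G)) :=
    fun p => ⟨(p.1 : G) * p.2, Set.mul_mem_mul p.1.2 p.2.2⟩
  have h := Nat.card_congr (Equiv.sigmaFiberEquiv f).symm
  rw [Nat.card_prod] at h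
  have hfib : ∀ z, Fintype.card {p : A × B // f p = z} = Nat.card (A ⊓ B : Subgroup G) := by
    intro z
    rw [← Nat.card_eq_fintype_card, ← CD.fiber_card A B z]
    exact Nat.card_congr (Equiv.subtypeEquivRight (fun p => by simp [f, Subtype.ext_iff]))
  have hs : Nat.card ((y : ↑((A : Set G) * (B : Set G))) × {x // f x = y}) =
      Nat.card ↑((A : Set G) * (B : Set G)) * Nat.card (A ⊓ B : Subgroup G) := by
    conv_lhs => rw [Nat.card_eq_fintype_card]
    rw [Fintype.card_sigma]
    simp only [hfib]
    rw [Finset.sum_const, Finset.card_univ, smul_eq_mul]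
    simp [Nat.card_eq_fintype_card]
  rw [hs] at h
  exact h.symm

/-- The multiplicative Chermak–Delgado measure `|H| · |C_G(H)|`. -/
noncomputable def CD.mStar {G : Type*} [Group G] (L : Subgroup G) : ℕ :=
  Nat.card L * Nat.card (Subgroup.centralizer (L : Set G))

lemma CD.cdMeasure_mul_mStar {G : Type*} [Group G] [Finite G] (L : Subgroup G) :
    cdMeasure L * CD.mStar L = Nat.card G * Nat.card G := by
  unfold cdMeasure CD.mStar
  rw [mul_mul_mul_comm, mul_comm L.index, Subgroup.card_mul_index,
    mul_comm (Subgroup.centralizer (L : Set G)).index, Subgroup.card_mul_index]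

lemma CD.mStar_le {G : Type*} [Group G] [Finite G] {H : Subgroup G}
    (hH : IsCDSubgroup H) (L : Subgroup G) : CD.mStar L ≤ CD.mStar H := by
  have h1 : cdMeasure H ≤ cdMeasure L := hH ▸ Nat.sInf_le ⟨L, rfl⟩
  have hpos : 0 < cdMeasure H := by
    rcases Nat.eq_zero_or_pos (cdMeasure H) with h | h
    · have := CD.cdMeasure_mul_mStar H
      rw [h, zero_mul] at this
      have hg : 0 < Nat.card G := Nat.card_pos
      exact absurd this.symm (Nat.mul_ne_zero hg.ne' hg.ne')
    · exact h
  have key : cdMeasure H * CD.mStar L ≤ cdMeasure H * CD.mStar H := by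
    calc cdMeasure H * CD.mStar L ≤ cdMeasure L * CD.mStar L :=
          Nat.mul_le_mul_right _ h1
      _ = Nat.card G * Nat.card G := CD.cdMeasure_mul_mStar L
      _ = cdMeasure H * CD.mStar H := (CD.cdMeasure_mul_mStar H).symm
  exact Nat.le_of_mul_le_mul_left key hpos

lemma CD.centralizer_sup {G : Type*} [Group G] (H K : Subgroup G) :
    Subgroup.centralizer ((H ⊔ K : Subgroup G) : Set G) =
      Subgroup.centralizer (H : Set G) ⊓ Subgroup.centralizer (K : Set G) := by
  refine le_antisymm (le_inf (Subgroup.centralizer_le ?_) (Subgroup.centralizer_le ?_)) ?_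
  · exact SetLike.coe_subset_coe.mpr le_sup_left
  · exact SetLike.coe_subset_coe.mpr le_sup_right
  · intro x hx
    rw [Subgroup.mem_inf] at hx
    rw [Subgroup.mem_centralizer_iff] at hx ⊢
    intro m hm
    have hle : H ⊔ K ≤ Subgroup.centralizer {x} := by
      refine sup_le ?_ ?_ <;> intro g hg <;>
        rw [Subgroup.mem_centralizer_iff] <;> rintro y rfl
      · exact (hx.1 g hg).symm
      · exact (hx.2 g hg).symm
    exact (hle hm x rfl).symm

theorem stmt_1 {G : Type*} [Group G] [Finite G] (H K : Subgroup G)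
    (hH : IsCDSubgroup H) (hK : IsCDSubgroup K) :
    (Subgroup.centralizer ((H ⊓ K : Subgroup G) : Set G) : Set G) =
      (Subgroup.centralizer (H : Set G) : Set G) *
        (Subgroup.centralizer (K : Set G) : Set G) := by
  classical
  set cH := Subgroup.centralizer (H : Set G) with hcH
  set cK := Subgroup.centralizer (K : Set G) with hcK
  set E := Subgroup.centralizer ((H ⊓ K : Subgroup G) : Set G) with hE
  -- basic inclusions
  have hSsub : (cH : Set G) * (cK : Set G) ⊆ (E : Set G) := by
    rw [Set.mul_subset_iff]
    intro x hx y hy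
    have h1 : cH ≤ E := Subgroup.centralizer_le (SetLike.coe_subset_coe.mpr inf_le_left)
    have h2 : cK ≤ E := Subgroup.centralizer_le (SetLike.coe_subset_coe.mpr inf_le_right)
    exact E.mul_mem (h1 hx) (h2 hy)
  have hHKsub : (H : Set G) * (K : Set G) ⊆ ((H ⊔ K : Subgroup G) : Set G) := by
    rw [Set.mul_subset_iff]
    intro x hx y hy
    exact (H ⊔ K).mul_mem ((le_sup_left : H ≤ H ⊔ K) hx) ((le_sup_right : K ≤ H ⊔ K) hy)
  -- cardinalities
  set a := Nat.card H
  set b := Nat.card K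
  set i := Nat.card (H ⊓ K : Subgroup G)
  set j := Nat.card (H ⊔ K : Subgroup G)
  set c := Nat.card cH
  set d := Nat.card cK
  set e := Nat.card E
  set f := Nat.card (cH ⊓ cK : Subgroup G)
  set s := Nat.card ↑((cH : Set G) * (cK : Set G))
  set t := Nat.card ↑((H : Set G) * (K : Set G))
  have A1 : t * i = a * b := CD.card_mul_mul_card_inf H K
  have A2 : s * f = c * d := CD.card_mul_mul_card_inf cH cK
  have A3 : t ≤ j := by
    have := Nat.card_mono (Set.toFinite _) hHKsub
    simpa [t, j] using this
  have A4 : s ≤ e := by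
    have := Nat.card_mono (Set.toFinite _) hSsub
    simpa [s, e] using this
  have A5 : i * e ≤ a * c := CD.mStar_le hH (H ⊓ K)
  have A6 : j * f ≤ a * c := by
    have := CD.mStar_le hH (H ⊔ K)
    rwa [CD.mStar, CD.centralizer_sup, ← hcH, ← hcK] at this
  have A7 : a * c = b * d := le_antisymm (CD.mStar_le hK H) (CD.mStar_le hH K)
  -- positivity
  have hipos : 0 < i := Nat.card_pos
  have hjpos : 0 < j := Nat.card_pos
  have hfpos : 0 < f := Nat.card_pos
  -- the counting argument: e ≤ s
  have hes : e ≤ s := by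
    have key : e * (i * j * f) ≤ s * (i * j * f) := by
      calc e * (i * j * f) = (i * e) * (j * f) := by ring
        _ ≤ (a * c) * (a * c) := Nat.mul_le_mul A5 A6
        _ = (a * c) * (b * d) := by rw [A7]
        _ = (a * b) * (c * d) := by ring
        _ = (t * i) * (s * f) := by rw [A1, A2]
        _ ≤ (j * i) * (s * f) := Nat.mul_le_mul (Nat.mul_le_mul_right i A3) le_rfl
        _ = s * (i * j * f) := by ring
    exact Nat.le_of_mul_le_mul_right key (by positivity)
  have hcard : e = s := le_antisymm hes A4
  -- conclude set equality
  refine (Set.eq_of_subset_of_ncard_le hSsub ?_ (Set.toFinite _)).symm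
  rw [← Nat.card_coe_set_eq, ← Nat.card_coe_set_eq]
  have h1 : Nat.card ↑(E : Set G) = e := by simp [e]
  rw [h1, hcard]
end

section
/- Let G be a finite group and let H and K be CD-subgroups of G. Then H ∩ K is a CD-subgroup of G. -/
open Pointwise

set_option linter.unusedSectionVars false

section Aux

variable {G : Type*} [Group G] [Finite G]

lemma index_ne_zero' (H : Subgroup G) : H.index ≠ 0 :=
  Subgroup.index_ne_zero_of_finite

lemma relindex_ne_zero' (H K : Subgroup G) : H.relIndex K ≠ 0 :=
  Subgroup.index_ne_zero_of_finite

/-- `|G:H⊓K| * |G:H⊔K| ≤ |G:H| * |G:K|`. -/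
lemma index_inf_mul_index_sup_le (H K : Subgroup G) :
    (H ⊓ K).index * (H ⊔ K).index ≤ H.index * K.index := by
  have h1 : (H ⊓ K).index = H.relIndex K * K.index := by
    rw [← Subgroup.inf_relIndex_right, Subgroup.relIndex_mul_index inf_le_right]
  have h2 : H.index = H.relIndex (H ⊔ K) * (H ⊔ K).index :=
    (Subgroup.relIndex_mul_index le_sup_left).symm
  have h3 : H.relIndex K ≤ H.relIndex (H ⊔ K) :=
    Subgroup.relIndex_le_of_le_right le_sup_right (relindex_ne_zero' H (H ⊔ K))
  calc (H ⊓ K).index * (H ⊔ K).index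
      = H.relIndex K * (H ⊔ K).index * K.index := by rw [h1]; ring
    _ ≤ H.relIndex (H ⊔ K) * (H ⊔ K).index * K.index := by
        gcongr
    _ = H.index * K.index := by rw [h2]

lemma index_le_of_le {H K : Subgroup G} (h : H ≤ K) : K.index ≤ H.index :=
  Nat.le_of_dvd (Nat.pos_of_ne_zero (index_ne_zero' H)) (Subgroup.index_dvd_of_le h)

lemma centralizer_sup_le (H K : Subgroup G) :
    Subgroup.centralizer (H : Set G) ⊔ Subgroup.centralizer (K : Set G)
      ≤ Subgroup.centralizer ((H ⊓ K : Subgroup G) : Set G) := by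
  apply sup_le
  · exact Subgroup.centralizer_le (by exact_mod_cast inf_le_left)
  · exact Subgroup.centralizer_le (by exact_mod_cast inf_le_right)

lemma inf_centralizer_le (H K : Subgroup G) :
    Subgroup.centralizer (H : Set G) ⊓ Subgroup.centralizer (K : Set G)
      ≤ Subgroup.centralizer ((H ⊔ K : Subgroup G) : Set G) := by
  intro x hx
  rw [Subgroup.mem_centralizer_iff]
  intro h hh
  have hh' : h ∈ H ⊔ K := hh
  have : H ⊔ K ≤ Subgroup.centralizer {x} := by
    apply sup_le
    · intro a ha
      rw [Subgroup.mem_centralizer_singleton_iff]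
      exact Subgroup.mem_centralizer_iff.mp hx.1 a ha
    · intro a ha
      rw [Subgroup.mem_centralizer_singleton_iff]
      exact Subgroup.mem_centralizer_iff.mp hx.2 a ha
  have := this hh'
  rw [Subgroup.mem_centralizer_singleton_iff] at this
  exact this

/-- Key submultiplicativity: `m(H⊓K) * m(H⊔K) ≤ m(H) * m(K)`. -/
lemma cdMeasure_inf_mul_cdMeasure_sup_le (H K : Subgroup G) :
    cdMeasure (H ⊓ K) * cdMeasure (H ⊔ K) ≤ cdMeasure H * cdMeasure K := by
  set A := Subgroup.centralizer (H : Set G)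
  set B := Subgroup.centralizer (K : Set G)
  have hc1 : (Subgroup.centralizer ((H ⊓ K : Subgroup G) : Set G)).index ≤ (A ⊔ B).index :=
    index_le_of_le (centralizer_sup_le H K)
  have hc2 : (Subgroup.centralizer ((H ⊔ K : Subgroup G) : Set G)).index ≤ (A ⊓ B).index :=
    index_le_of_le (inf_centralizer_le H K)
  have hAB : (A ⊓ B).index * (A ⊔ B).index ≤ A.index * B.index :=
    index_inf_mul_index_sup_le A B
  have hHK : (H ⊓ K).index * (H ⊔ K).index ≤ H.index * K.index :=
    index_inf_mul_index_sup_le H K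
  calc cdMeasure (H ⊓ K) * cdMeasure (H ⊔ K)
      = ((H ⊓ K).index * (H ⊔ K).index) *
        ((Subgroup.centralizer ((H ⊓ K : Subgroup G) : Set G)).index *
          (Subgroup.centralizer ((H ⊔ K : Subgroup G) : Set G)).index) := by
        unfold cdMeasure; ring
    _ ≤ (H.index * K.index) * ((A ⊔ B).index * (A ⊓ B).index) := by
        gcongr
    _ = (H.index * K.index) * ((A ⊓ B).index * (A ⊔ B).index) := by ring
    _ ≤ (H.index * K.index) * (A.index * B.index) := by gcongr
    _ = cdMeasure H * cdMeasure K := by unfold cdMeasure; ring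

lemma cdMu_le (L : Subgroup G) : cdMu G ≤ cdMeasure L :=
  Nat.sInf_le ⟨L, rfl⟩

lemma cdMu_pos : 0 < cdMu G := by
  have h : cdMu G ∈ {n : ℕ | ∃ H : Subgroup G, cdMeasure H = n} :=
    Nat.sInf_mem ⟨cdMeasure ⊤, ⊤, rfl⟩
  obtain ⟨L, hL⟩ := h
  rw [← hL]
  exact Nat.pos_of_ne_zero (Nat.mul_ne_zero (index_ne_zero' L) (index_ne_zero' _))

end Aux

theorem stmt_2 {G : Type*} [Group G] [Finite G] (H K : Subgroup G)
    (hH : IsCDSubgroup H) (hK : IsCDSubgroup K) :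
    IsCDSubgroup (H ⊓ K) := by
  have key := cdMeasure_inf_mul_cdMeasure_sup_le H K
  rw [hH, hK] at key
  have h1 : cdMu G ≤ cdMeasure (H ⊓ K) := cdMu_le _
  have h2 : cdMu G ≤ cdMeasure (H ⊔ K) := cdMu_le _
  have hpos : 0 < cdMeasure (H ⊔ K) := lt_of_lt_of_le cdMu_pos h2
  have : cdMeasure (H ⊓ K) * cdMeasure (H ⊔ K) ≤ cdMu G * cdMeasure (H ⊔ K) :=
    key.trans (Nat.mul_le_mul_left _ h2)
  have := Nat.le_of_mul_le_mul_right this hpos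
  exact le_antisymm this h1
end

section
/- Let G be a finite group. There exists a CD-subgroup M = M(G) of G containing every CD-subgroup of G, its centralizer m(G) := C_G(M(G)) is a CD-subgroup contained in every CD-subgroup of G, and moreover m(G) = Z(M(G)) (the center of M(G)) and M(G) = C_G(m(G)). -/
open Pointwise

namespace CDaux

open Subgroup

variable {G : Type*} [Group G] [Finite G]

/-- The usual (cardinality) Chermak–Delgado measure. -/
noncomputable def fCD (H : Subgroup G) : ℕ :=
  Nat.card H * Nat.card (Subgroup.centralizer (H : Set G))

lemma fCD_pos (H : Subgroup G) : 0 < fCD H :=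
  Nat.mul_pos Nat.card_pos Nat.card_pos

lemma cd_prod (H : Subgroup G) : cdMeasure H * fCD H = Nat.card G ^ 2 := by
  have h1 := Subgroup.card_mul_index H
  have h2 := Subgroup.card_mul_index (Subgroup.centralizer (H : Set G))
  unfold cdMeasure fCD
  have : H.index * (Subgroup.centralizer (H : Set G)).index *
      (Nat.card H * Nat.card (Subgroup.centralizer (H : Set G)))
      = (Nat.card H * H.index) *
        (Nat.card (Subgroup.centralizer (H : Set G)) * (Subgroup.centralizer (H : Set G)).index) := by
    ring
  rw [this, h1, h2, sq]

lemma cdMeasure_pos (H : Subgroup G) : 0 < cdMeasure H := by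
  rcases Nat.eq_zero_or_pos (cdMeasure H) with h0 | h0
  · exfalso
    have h := cd_prod H
    rw [h0, zero_mul] at h
    have hG : 0 < Nat.card G := Nat.card_pos
    nlinarith
  · exact h0

lemma measure_le_iff (H K : Subgroup G) : cdMeasure H ≤ cdMeasure K ↔ fCD K ≤ fCD H := by
  have heq : cdMeasure H * fCD H = cdMeasure K * fCD K := by rw [cd_prod, cd_prod]
  constructor
  · intro h
    have : cdMeasure H * fCD K ≤ cdMeasure H * fCD H := by
      calc cdMeasure H * fCD K ≤ cdMeasure K * fCD K := Nat.mul_le_mul_right _ h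
        _ = cdMeasure H * fCD H := heq.symm
    exact Nat.le_of_mul_le_mul_left this (cdMeasure_pos H)
  · intro h
    have : cdMeasure H * fCD H ≤ cdMeasure K * fCD H := by
      calc cdMeasure H * fCD H = cdMeasure K * fCD K := heq
        _ ≤ cdMeasure K * fCD H := Nat.mul_le_mul_left _ h
    exact Nat.le_of_mul_le_mul_right this (fCD_pos H)

lemma isCD_iff (H : Subgroup G) : IsCDSubgroup H ↔ ∀ K : Subgroup G, fCD K ≤ fCD H := by
  have hmem : ∀ K : Subgroup G, cdMu G ≤ cdMeasure K := fun K =>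
    Nat.sInf_le ⟨K, rfl⟩
  have hne : {n : ℕ | ∃ H : Subgroup G, cdMeasure H = n}.Nonempty := ⟨cdMeasure ⊥, ⊥, rfl⟩
  obtain ⟨H0, hH0⟩ := Nat.sInf_mem hne
  constructor
  · intro h K
    rw [← measure_le_iff]
    rw [IsCDSubgroup] at h
    rw [h]; exact hmem K
  · intro h
    refine le_antisymm ?_ (hmem H)
    rw [show cdMu G = cdMeasure H0 from hH0.symm, measure_le_iff]
    exact h H0

lemma relIndex_ne_zero (H K : Subgroup G) : H.relIndex K ≠ 0 :=
  Subgroup.index_ne_zero_of_finite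

/-- The key cardinality inequality. -/
lemma card_mul_card_le (H K : Subgroup G) :
    Nat.card H * Nat.card K ≤ Nat.card ↥(H ⊔ K) * Nat.card ↥(H ⊓ K) := by
  -- card H = card (H ⊓ K) * K.relindex H
  have h1 : Nat.card H = Nat.card ↥(H ⊓ K) * K.relIndex H := by
    have := Subgroup.card_mul_index ((H ⊓ K).subgroupOf H)
    rw [Nat.card_congr (Subgroup.subgroupOfEquivOfLe (inf_le_left : H ⊓ K ≤ H)).toEquiv,
      show ((H ⊓ K).subgroupOf H).index = (H ⊓ K).relIndex H from rfl,
      Subgroup.inf_relIndex_left] at this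
    exact this.symm
  have h2 : Nat.card ↥(H ⊔ K) = Nat.card K * K.relIndex (H ⊔ K) := by
    have := Subgroup.card_mul_index (K.subgroupOf (H ⊔ K))
    rw [Nat.card_congr (Subgroup.subgroupOfEquivOfLe (le_sup_right : K ≤ H ⊔ K)).toEquiv] at this
    exact this.symm
  have h3 : K.relIndex H ≤ K.relIndex (H ⊔ K) :=
    Subgroup.relIndex_le_of_le_right le_sup_left (relIndex_ne_zero K (H ⊔ K))
  calc Nat.card H * Nat.card K = Nat.card ↥(H ⊓ K) * K.relIndex H * Nat.card K := by rw [h1]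
    _ ≤ Nat.card ↥(H ⊓ K) * K.relIndex (H ⊔ K) * Nat.card K := by
        exact Nat.mul_le_mul_right _ (Nat.mul_le_mul_left _ h3)
    _ = Nat.card ↥(H ⊔ K) * Nat.card ↥(H ⊓ K) := by rw [h2]; ring

lemma centralizer_sup (H K : Subgroup G) :
    Subgroup.centralizer ((H ⊔ K : Subgroup G) : Set G)
      = Subgroup.centralizer (H : Set G) ⊓ Subgroup.centralizer (K : Set G) := by
  apply le_antisymm
  · exact le_inf (Subgroup.centralizer_le (SetLike.coe_subset_coe.mpr le_sup_left))
      (Subgroup.centralizer_le (SetLike.coe_subset_coe.mpr le_sup_right))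
  · rw [Subgroup.le_centralizer_iff]
    refine sup_le ?_ ?_
    · rw [← Subgroup.le_centralizer_iff]
      exact inf_le_left
    · rw [← Subgroup.le_centralizer_iff]
      exact inf_le_right

lemma sup_le_centralizer_inf (H K : Subgroup G) :
    Subgroup.centralizer (H : Set G) ⊔ Subgroup.centralizer (K : Set G)
      ≤ Subgroup.centralizer ((H ⊓ K : Subgroup G) : Set G) :=
  sup_le (Subgroup.centralizer_le (SetLike.coe_subset_coe.mpr inf_le_left))
    (Subgroup.centralizer_le (SetLike.coe_subset_coe.mpr inf_le_right))

lemma le_centralizer_centralizer (H : Subgroup G) :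
    H ≤ Subgroup.centralizer ((Subgroup.centralizer (H : Set G) : Subgroup G) : Set G) := by
  rw [Subgroup.le_centralizer_iff]

/-- CD-subgroups are closed under join and meet. -/
lemma isCD_sup_and_inf {H K : Subgroup G} (hH : IsCDSubgroup H) (hK : IsCDSubgroup K) :
    IsCDSubgroup (H ⊔ K) ∧ IsCDSubgroup (H ⊓ K) := by
  set n := fCD H with hn
  have hmaxH := (isCD_iff H).mp hH
  have hmaxK := (isCD_iff K).mp hK
  have hKn : fCD K = n := le_antisymm (hmaxH K) (hmaxK H)
  have hsupn : fCD (H ⊔ K) ≤ n := hmaxH _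
  have hinfn : fCD (H ⊓ K) ≤ n := hmaxH _
  have key : n * n ≤ fCD (H ⊔ K) * fCD (H ⊓ K) := by
    have hC : Nat.card ↥(Subgroup.centralizer ((H ⊔ K : Subgroup G) : Set G))
        = Nat.card ↥(Subgroup.centralizer (H : Set G) ⊓ Subgroup.centralizer (K : Set G)) := by
      rw [centralizer_sup]
    have hC2 : Nat.card ↥(Subgroup.centralizer (H : Set G) ⊔ Subgroup.centralizer (K : Set G))
        ≤ Nat.card ↥(Subgroup.centralizer ((H ⊓ K : Subgroup G) : Set G)) :=
      Subgroup.card_le_of_le (sup_le_centralizer_inf H K)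
    have h1 := card_mul_card_le H K
    have h2 := card_mul_card_le (Subgroup.centralizer (H : Set G))
      (Subgroup.centralizer (K : Set G))
    calc n * n = fCD H * fCD K := by rw [hKn, hn]
      _ = (Nat.card H * Nat.card K) *
          (Nat.card ↥(Subgroup.centralizer (H : Set G))
            * Nat.card ↥(Subgroup.centralizer (K : Set G))) := by unfold fCD; ring
      _ ≤ (Nat.card ↥(H ⊔ K) * Nat.card ↥(H ⊓ K)) *
          (Nat.card ↥(Subgroup.centralizer (H : Set G) ⊔ Subgroup.centralizer (K : Set G))
            * Nat.card ↥(Subgroup.centralizer (H : Set G) ⊓ Subgroup.centralizer (K : Set G))) :=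
        Nat.mul_le_mul h1 h2
      _ ≤ (Nat.card ↥(H ⊔ K) * Nat.card ↥(H ⊓ K)) *
          (Nat.card ↥(Subgroup.centralizer ((H ⊓ K : Subgroup G) : Set G))
            * Nat.card ↥(Subgroup.centralizer ((H ⊔ K : Subgroup G) : Set G))) := by
        rw [hC]
        exact Nat.mul_le_mul_left _ (Nat.mul_le_mul_right _ hC2)
      _ = fCD (H ⊔ K) * fCD (H ⊓ K) := by unfold fCD; ring
  have hnpos : 0 < n := fCD_pos H
  have hsup_eq : fCD (H ⊔ K) = n := by nlinarith
  have hinf_eq : fCD (H ⊓ K) = n := by nlinarith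
  constructor
  · rw [isCD_iff]; intro L; rw [hsup_eq]; exact hmaxH L
  · rw [isCD_iff]; intro L; rw [hinf_eq]; exact hmaxH L

/-- If `H` is a CD-subgroup then so is its centralizer, and double centralizer is `H`. -/
lemma isCD_centralizer {H : Subgroup G} (hH : IsCDSubgroup H) :
    IsCDSubgroup (Subgroup.centralizer (H : Set G)) ∧
      Subgroup.centralizer ((Subgroup.centralizer (H : Set G) : Subgroup G) : Set G) = H := by
  have hmaxH := (isCD_iff H).mp hH
  set C := Subgroup.centralizer (H : Set G) with hC
  have hle : H ≤ Subgroup.centralizer (C : Set G) := le_centralizer_centralizer H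
  have hcard : Nat.card H ≤ Nat.card ↥(Subgroup.centralizer (C : Set G)) :=
    Subgroup.card_le_of_le hle
  have h1 : fCD H ≤ fCD C := by
    unfold fCD
    rw [← hC]
    calc Nat.card H * Nat.card C ≤ Nat.card ↥(Subgroup.centralizer (C : Set G)) * Nat.card C :=
          Nat.mul_le_mul_right _ hcard
      _ = Nat.card C * Nat.card ↥(Subgroup.centralizer (C : Set G)) := mul_comm _ _
  have hCD : IsCDSubgroup C := by
    rw [isCD_iff]; intro L; exact le_trans (hmaxH L) h1
  refine ⟨hCD, ?_⟩
  have h2 : fCD C ≤ fCD H := hmaxH C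
  have heq : fCD C = fCD H := le_antisymm h2 h1
  have hcards : Nat.card ↥(Subgroup.centralizer (C : Set G)) = Nat.card H := by
    have : Nat.card C * Nat.card ↥(Subgroup.centralizer (C : Set G))
        = Nat.card C * Nat.card H := by
      have := heq
      unfold fCD at this
      rw [← hC] at this
      nlinarith
    exact Nat.eq_of_mul_eq_mul_left Nat.card_pos this
  exact (Subgroup.eq_of_le_of_card_ge hle hcards.le).symm

lemma exists_isCD : ∃ H : Subgroup G, IsCDSubgroup H := by
  have hne : {n : ℕ | ∃ H : Subgroup G, cdMeasure H = n}.Nonempty := ⟨cdMeasure ⊥, ⊥, rfl⟩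
  obtain ⟨H0, hH0⟩ := Nat.sInf_mem hne
  exact ⟨H0, hH0⟩

end CDaux

theorem stmt_5 {G : Type*} [Group G] [Finite G] :
    ∃ M : Subgroup G, IsCDSubgroup M ∧ (∀ H : Subgroup G, IsCDSubgroup H → H ≤ M) ∧
      IsCDSubgroup (Subgroup.centralizer (M : Set G)) ∧
      (∀ H : Subgroup G, IsCDSubgroup H → Subgroup.centralizer (M : Set G) ≤ H) ∧
      Subgroup.centralizer (M : Set G) = (Subgroup.center M).map M.subtype ∧
      Subgroup.centralizer ((Subgroup.centralizer (M : Set G) : Subgroup G) : Set G) = M := by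
  classical
  have hfin : ({H : Subgroup G | IsCDSubgroup H}).Finite := Set.toFinite _
  obtain ⟨H0, hH0⟩ := CDaux.exists_isCD (G := G)
  have hne : hfin.toFinset.Nonempty := ⟨H0, by simpa using hH0⟩
  set M : Subgroup G := hfin.toFinset.sup' hne id with hM
  have hMcd : IsCDSubgroup M := by
    refine Finset.sup'_induction hne id (fun a ha b hb => ?_) (fun H hH => ?_)
    · exact (CDaux.isCD_sup_and_inf ha hb).1
    · simpa using hH
  have hMmax : ∀ H : Subgroup G, IsCDSubgroup H → H ≤ M := by
    intro H hH
    exact Finset.le_sup' id (by simpa using hH)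
  have hCcd : IsCDSubgroup (Subgroup.centralizer (M : Set G)) :=
    (CDaux.isCD_centralizer hMcd).1
  have hCC : Subgroup.centralizer ((Subgroup.centralizer (M : Set G) : Subgroup G) : Set G) = M :=
    (CDaux.isCD_centralizer hMcd).2
  have hCmin : ∀ H : Subgroup G, IsCDSubgroup H → Subgroup.centralizer (M : Set G) ≤ H := by
    intro H hH
    have hCH : IsCDSubgroup (Subgroup.centralizer (H : Set G)) := (CDaux.isCD_centralizer hH).1
    have hCHM : Subgroup.centralizer (H : Set G) ≤ M := hMmax _ hCH
    have := Subgroup.centralizer_le (SetLike.coe_subset_coe.mpr hCHM)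
    rw [(CDaux.isCD_centralizer hH).2] at this
    exact this
  refine ⟨M, hMcd, hMmax, hCcd, hCmin, ?_, hCC⟩
  -- C_G(M) = Z(M)
  have hCleM : Subgroup.centralizer (M : Set G) ≤ M := hCmin M hMcd
  ext x
  simp only [Subgroup.mem_map, Subgroup.mem_center_iff]
  constructor
  · intro hx
    refine ⟨⟨x, hCleM hx⟩, ?_, rfl⟩
    intro g
    exact Subtype.ext (Subgroup.mem_centralizer_iff.mp hx g g.2)
  · rintro ⟨⟨y, hy⟩, hyc, rfl⟩
    rw [Subgroup.mem_centralizer_iff]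
    intro h hh
    exact congrArg Subtype.val (hyc ⟨h, hh⟩)
end

section
/- Let G be a finite group. Every CD-subgroup of G is subnormal in G. -/
open Pointwise

/-- `H` is subnormal in `G`: there is a chain `H = H_0 ⊴ H_1 ⊴ ⋯ ⊴ H_k = G`,
each normal in the next. -/
def IsSubnormal {G : Type*} [Group G] (H : Subgroup G) : Prop :=
  ∃ k : ℕ, ∃ c : ℕ → Subgroup G, c 0 = H ∧ c k = ⊤ ∧
    ∀ i < k, c i ≤ c (i + 1) ∧ c (i + 1) ≤ Subgroup.normalizer (c i : Set G)

universe u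

namespace CDWork
variable {G : Type u} [Group G]

/-- order measure -/
noncomputable def fm (H : Subgroup G) : ℕ :=
  Nat.card H * Nat.card (Subgroup.centralizer (H : Set G))

/-- conjugate subgroup -/
def conjSub (g : G) (H : Subgroup G) : Subgroup G := H.map (MulAut.conj g).toMonoidHom

lemma mem_conjSub {g x : G} {H : Subgroup G} : x ∈ conjSub g H ↔ g⁻¹ * x * g ∈ H := by
  constructor
  · rintro ⟨y, hy, rfl⟩
    simpa [MulAut.conj_apply, mul_assoc] using hy
  · intro h
    exact ⟨g⁻¹ * x * g, h, by simp [MulAut.conj_apply, mul_assoc]⟩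

lemma conjSub_conjSub (a b : G) (H : Subgroup G) :
    conjSub (a * b) H = conjSub a (conjSub b H) := by
  ext x; simp [mem_conjSub, mul_assoc]

lemma conjSub_one (H : Subgroup G) : conjSub 1 H = H := by
  ext x; simp [mem_conjSub]

lemma conjSub_self {k : G} {K : Subgroup G} (hk : k ∈ K) : conjSub k K = K := by
  ext x
  rw [mem_conjSub]
  constructor
  · intro h
    have := K.mul_mem (K.mul_mem hk h) (K.inv_mem hk)
    simpa [mul_assoc] using this
  · intro h
    exact K.mul_mem (K.mul_mem (K.inv_mem hk) h) hk

lemma card_conjSub (g : G) (H : Subgroup G) : Nat.card (conjSub g H) = Nat.card H :=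
  (Nat.card_congr (H.equivMapOfInjective _ (MulAut.conj g).injective).toEquiv).symm

lemma centralizer_conjSub (g : G) (H : Subgroup G) :
    Subgroup.centralizer ((conjSub g H : Subgroup G) : Set G)
      = conjSub g (Subgroup.centralizer (H : Set G)) := by
  ext x
  rw [mem_conjSub, Subgroup.mem_centralizer_iff, Subgroup.mem_centralizer_iff]
  constructor
  · intro hx h hh
    have hmem : g * h * g⁻¹ ∈ (conjSub g H : Subgroup G) := by
      rw [mem_conjSub]; simpa [mul_assoc] using hh
    have := hx (g * h * g⁻¹) hmem
    calc h * (g⁻¹ * x * g) = g⁻¹ * ((g * h * g⁻¹) * x) * g := by group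
      _ = g⁻¹ * (x * (g * h * g⁻¹)) * g := by rw [this]
      _ = (g⁻¹ * x * g) * h := by group
  · intro hx h hh
    have hh' : g⁻¹ * h * g ∈ H := mem_conjSub.mp hh
    have := hx (g⁻¹ * h * g) hh'
    calc h * x = g * ((g⁻¹ * h * g) * (g⁻¹ * x * g)) * g⁻¹ := by group
      _ = g * ((g⁻¹ * x * g) * (g⁻¹ * h * g)) * g⁻¹ := by rw [this]
      _ = x * h := by group

lemma fm_conjSub (g : G) (H : Subgroup G) : fm (conjSub g H) = fm H := by
  rw [fm, fm, centralizer_conjSub, card_conjSub, card_conjSub]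

lemma card_mul_card_inf [Finite G] (A B : Subgroup G) :
    Nat.card (↑A * ↑B : Set G) * Nat.card ↥(A ⊓ B) = Nat.card A * Nat.card B := by
  letI : SMul (↥A × ↥B) G := ⟨fun p g => ↑p.1 * g * (↑p.2 : G)⁻¹⟩
  letI : MulAction (↥A × ↥B) G :=
    { one_smul := fun g => by
        show ((1 : ↥A) : G) * g * (((1 : ↥B) : G))⁻¹ = g
        simp
      mul_smul := fun p q g => by
        show ((p.1 * q.1 : ↥A) : G) * g * (((p.2 * q.2 : ↥B) : G))⁻¹
          = (p.1 : G) * ((q.1 : G) * g * ((q.2 : G))⁻¹) * ((p.2 : G))⁻¹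
        push_cast
        group }
  have horb : MulAction.orbit (↥A × ↥B) (1 : G) = (↑A * ↑B : Set G) := by
    ext x
    rw [MulAction.mem_orbit_iff]
    constructor
    · rintro ⟨⟨a, b⟩, rfl⟩
      have hsmul : ((a, b) : ↥A × ↥B) • (1 : G) = (a : G) * 1 * ((b : G))⁻¹ := rfl
      rw [hsmul]
      exact ⟨(a : G), a.2, ((b : G))⁻¹, B.inv_mem b.2, by group⟩
    · rintro ⟨a, ha, b, hb, rfl⟩
      refine ⟨(⟨a, ha⟩, ⟨b⁻¹, B.inv_mem hb⟩), ?_⟩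
      show a * 1 * (b⁻¹)⁻¹ = a * b
      group
  have hstab : Nat.card (MulAction.stabilizer (↥A × ↥B) (1 : G)) = Nat.card ↥(A ⊓ B) := by
    apply Nat.card_congr
    refine
      { toFun := fun p => ⟨((p : ↥A × ↥B).1 : G), ?_⟩
        invFun := fun x => ⟨(⟨(x : G), x.2.1⟩, ⟨(x : G), x.2.2⟩), ?_⟩
        left_inv := ?_
        right_inv := ?_ }
    · have hp : ((p : ↥A × ↥B).1 : G) * 1 * (((p : ↥A × ↥B).2 : G))⁻¹ = 1 := p.2
      have heq : ((p : ↥A × ↥B).1 : G) = ((p : ↥A × ↥B).2 : G) := by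
        have := hp
        rw [mul_one] at this
        exact (mul_inv_eq_one.mp this)
      exact ⟨(p : ↥A × ↥B).1.2, heq ▸ (p : ↥A × ↥B).2.2⟩
    · show (x : G) * 1 * ((x : G))⁻¹ = 1
      group
    · rintro ⟨⟨a, b⟩, hp⟩
      have hp' : (a : G) * 1 * ((b : G))⁻¹ = 1 := hp
      have heq : (a : G) = (b : G) := by
        rw [mul_one] at hp'
        exact mul_inv_eq_one.mp hp'
      apply Subtype.ext
      apply Prod.ext
      · rfl
      · exact Subtype.ext heq
    · intro x
      rfl
  have hmain := Nat.card_congr (MulAction.orbitProdStabilizerEquivGroup (↥A × ↥B) (1 : G))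
  rw [Nat.card_prod, Nat.card_prod] at hmain
  rw [horb, hstab] at hmain
  exact hmain

lemma centralizer_sup_eq (A B : Subgroup G) :
    Subgroup.centralizer ((A ⊔ B : Subgroup G) : Set G)
      = Subgroup.centralizer (A : Set G) ⊓ Subgroup.centralizer (B : Set G) := by
  apply le_antisymm
  · exact le_inf (Subgroup.centralizer_le (SetLike.coe_subset_coe.mpr le_sup_left))
      (Subgroup.centralizer_le (SetLike.coe_subset_coe.mpr le_sup_right))
  · rw [← Subgroup.le_centralizer_iff]
    exact sup_le (Subgroup.le_centralizer_iff.mpr inf_le_left)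
      (Subgroup.le_centralizer_iff.mpr inf_le_right)

lemma coe_mul_subset_sup (A B : Subgroup G) :
    (↑A * ↑B : Set G) ⊆ ((A ⊔ B : Subgroup G) : Set G) := by
  rintro x ⟨a, ha, b, hb, rfl⟩
  exact mul_mem (le_sup_left (a := A) (b := B) ha) (le_sup_right (a := A) (b := B) hb)

lemma cent_mul_subset_inf (A B : Subgroup G) :
    (↑(Subgroup.centralizer (A : Set G)) * ↑(Subgroup.centralizer (B : Set G)) : Set G)
      ⊆ ((Subgroup.centralizer ((A ⊓ B : Subgroup G) : Set G) : Subgroup G) : Set G) := by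
  rintro x ⟨a, ha, b, hb, rfl⟩
  exact mul_mem (Subgroup.centralizer_le (SetLike.coe_subset_coe.mpr inf_le_left) ha)
    (Subgroup.centralizer_le (SetLike.coe_subset_coe.mpr inf_le_right) hb)

lemma cd_join [Finite G] {H A B : Subgroup G}
    (hmax : ∀ K : Subgroup G, fm K ≤ fm H) (hA : fm A = fm H) (hB : fm B = fm H) :
    fm (A ⊔ B) = fm H ∧ ((A ⊔ B : Subgroup G) : Set G) = ↑A * ↑B := by
  classical
  set CA := Subgroup.centralizer (A : Set G) with hCA
  set CB := Subgroup.centralizer (B : Set G) with hCB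
  have h1 := card_mul_card_inf A B
  have h2 := card_mul_card_inf CA CB
  set P := Nat.card (↑A * ↑B : Set G) with hP
  set Q := Nat.card ↥(A ⊓ B) with hQ
  set R := Nat.card (↑CA * ↑CB : Set G) with hR
  set S := Nat.card ↥(CA ⊓ CB) with hS
  haveI : Nonempty ↥(↑A * ↑B : Set G) :=
    ⟨⟨1, 1, SetLike.mem_coe.mpr A.one_mem, 1, SetLike.mem_coe.mpr B.one_mem, mul_one 1⟩⟩
  haveI : Nonempty ↥(↑CA * ↑CB : Set G) :=
    ⟨⟨1, 1, SetLike.mem_coe.mpr CA.one_mem, 1, SetLike.mem_coe.mpr CB.one_mem, mul_one 1⟩⟩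
  have hP0 : 0 < P := Nat.card_pos
  have hQ0 : 0 < Q := Nat.card_pos
  have hR0 : 0 < R := Nat.card_pos
  have hS0 : 0 < S := Nat.card_pos
  have hm0 : 0 < fm H := by
    have : 0 < fm A := Nat.mul_pos Nat.card_pos Nat.card_pos
    omega
  -- inequalities
  have h3 : P ≤ Nat.card ↥(A ⊔ B) := by
    have h := Set.ncard_le_ncard (coe_mul_subset_sup A B) (Set.toFinite _)
    rw [← Nat.card_coe_set_eq, ← Nat.card_coe_set_eq] at h
    simpa [hP] using h
  have h4 : Nat.card (Subgroup.centralizer ((A ⊔ B : Subgroup G) : Set G)) = S := by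
    rw [centralizer_sup_eq]
  have h5 : R ≤ Nat.card (Subgroup.centralizer ((A ⊓ B : Subgroup G) : Set G)) := by
    have h := Set.ncard_le_ncard (cent_mul_subset_inf A B) (Set.toFinite _)
    rw [← Nat.card_coe_set_eq, ← Nat.card_coe_set_eq] at h
    simpa [hR, hCA, hCB] using h
  have key1 : fm H * fm H = (P * S) * (Q * R) := by
    calc fm H * fm H = fm A * fm B := by rw [hA, hB]
      _ = (Nat.card A * Nat.card CA) * (Nat.card B * Nat.card CB) := rfl
      _ = (Nat.card A * Nat.card B) * (Nat.card CA * Nat.card CB) := by ring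
      _ = (P * Q) * (R * S) := by rw [h1, h2]
      _ = (P * S) * (Q * R) := by ring
  have bound1 : P * S ≤ fm (A ⊔ B) := by
    show P * S ≤ Nat.card ↥(A ⊔ B) * Nat.card (Subgroup.centralizer ((A ⊔ B : Subgroup G) : Set G))
    rw [h4]
    exact Nat.mul_le_mul_right _ h3
  have bound2 : Q * R ≤ fm (A ⊓ B) := by
    show Q * R ≤ Nat.card ↥(A ⊓ B) * Nat.card (Subgroup.centralizer ((A ⊓ B : Subgroup G) : Set G))
    exact Nat.mul_le_mul_left _ h5
  have step1 : fm H * fm H ≤ fm (A ⊔ B) * fm (A ⊓ B) := by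
    rw [key1]
    exact Nat.mul_le_mul bound1 bound2
  have hfj : fm (A ⊔ B) = fm H := by
    refine le_antisymm (hmax _) ?_
    have h6 : fm H * fm H ≤ fm (A ⊔ B) * fm H :=
      le_trans step1 (Nat.mul_le_mul_left _ (hmax _))
    exact Nat.le_of_mul_le_mul_right h6 hm0
  have hfi : fm (A ⊓ B) = fm H := by
    refine le_antisymm (hmax _) ?_
    have h6 : fm H * fm H ≤ fm H * fm (A ⊓ B) := by
      calc fm H * fm H ≤ fm (A ⊔ B) * fm (A ⊓ B) := step1
        _ ≤ fm H * fm (A ⊓ B) := Nat.mul_le_mul_right _ (hmax _)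
    calc fm H = fm H * fm H / fm H := by rw [Nat.mul_div_cancel_left _ hm0]
      _ ≤ fm H * fm (A ⊓ B) / fm H := Nat.div_le_div_right h6
      _ = fm (A ⊓ B) := by rw [Nat.mul_div_cancel_left _ hm0]
  -- equality extraction
  have hx : P * S ≤ fm H := hfj ▸ bound1
  have hy : Q * R ≤ fm H := hfi ▸ bound2
  have h6 : fm H * fm H ≤ (P * S) * fm H := by
    calc fm H * fm H = (P * S) * (Q * R) := key1
      _ ≤ (P * S) * fm H := Nat.mul_le_mul_left _ hy
  have hPS : P * S = fm H := le_antisymm hx (Nat.le_of_mul_le_mul_right h6 hm0)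
  have hfj' : Nat.card ↥(A ⊔ B) * S = P * S := by
    have : fm (A ⊔ B) = Nat.card ↥(A ⊔ B) * S := by
      show Nat.card ↥(A ⊔ B) * Nat.card (Subgroup.centralizer ((A ⊔ B : Subgroup G) : Set G))
        = Nat.card ↥(A ⊔ B) * S
      rw [h4]
    rw [← this, hfj, ← hPS]
  have hcard : Nat.card ↥(A ⊔ B) = P := Nat.eq_of_mul_eq_mul_right hS0 hfj'
  refine ⟨hfj, ?_⟩
  symm
  apply Set.eq_of_subset_of_ncard_le (coe_mul_subset_sup A B) ?_ (Set.toFinite _)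
  rw [← Nat.card_coe_set_eq, ← Nat.card_coe_set_eq]
  have e1 : Nat.card ↥((A ⊔ B : Subgroup G) : Set G) = Nat.card ↥(A ⊔ B) := by simp
  rw [e1, hcard]

lemma coe_inv_self (H : Subgroup G) : (↑H : Set G)⁻¹ = ↑H := by
  ext x; simp

/-- A group is not the product of two distinct conjugate subgroups. -/
lemma conj_mul_eq_univ {H : Subgroup G} {g : G}
    (h : (↑H * ↑(conjSub g H) : Set G) = Set.univ) : conjSub g H = H := by
  set K := conjSub g H with hK
  have h2 : (↑K * ↑H : Set G) = Set.univ := by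
    have := congrArg (fun s : Set G => s⁻¹) h
    simpa [mul_inv_rev, coe_inv_self] using this
  have hg : g ∈ (↑K * ↑H : Set G) := h2 ▸ Set.mem_univ g
  obtain ⟨k, hk, h0, hh0, hkh⟩ := hg
  have hk' : k ∈ K := hk
  have hh0' : h0 ∈ H := hh0
  have hKk : K = conjSub k H := by
    rw [hK, ← hkh, conjSub_conjSub, conjSub_self hh0']
  have h3 : conjSub k⁻¹ K = H := by
    rw [hKk, ← conjSub_conjSub, inv_mul_cancel, conjSub_one]
  rw [← h3, conjSub_self (K.inv_mem hk')]

lemma centralizer_le_normalizer (H : Subgroup G) :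
    Subgroup.centralizer (H : Set G) ≤ Subgroup.normalizer (H : Set G) := by
  intro x hx
  rw [Subgroup.mem_normalizer_iff]
  intro h
  constructor
  · intro hh
    have hc := hx h (SetLike.mem_coe.mpr hh)
    have : x * h * x⁻¹ = h := by
      rw [← hc]; group
    rwa [this]
  · intro hh
    have hc := hx (x * h * x⁻¹) (SetLike.mem_coe.mpr hh)
    have : h = x * h * x⁻¹ := by
      have e : (x * h * x⁻¹) * x = x * (x * h * x⁻¹) := hc
      calc h = x⁻¹ * ((x * h * x⁻¹) * x) := by group
        _ = x⁻¹ * (x * (x * h * x⁻¹)) := by rw [e]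
        _ = x * h * x⁻¹ := by group
    rwa [this]

lemma normal_of_conjSub (H : Subgroup G) (h : ∀ g : G, conjSub g H = H) :
    (⊤ : Subgroup G) ≤ Subgroup.normalizer (H : Set G) := by
  intro x _
  rw [Subgroup.mem_normalizer_iff]
  intro y
  constructor
  · intro hy
    have : x * y * x⁻¹ ∈ conjSub x H := by
      rw [mem_conjSub]
      simpa [mul_assoc] using hy
    rwa [h x] at this
  · intro hy
    have : x * y * x⁻¹ ∈ conjSub x H := by rwa [h x]
    rw [mem_conjSub] at this
    simpa [mul_assoc] using this

lemma isSubnormal_top : IsSubnormal (⊤ : Subgroup G) :=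
  ⟨0, fun _ => ⊤, rfl, rfl, fun i hi => absurd hi (Nat.not_lt_zero i)⟩

lemma isSubnormal_step {H K : Subgroup G} (h1 : H ≤ K) (h2 : K ≤ Subgroup.normalizer (H : Set G))
    (h3 : IsSubnormal K) : IsSubnormal H := by
  obtain ⟨k, c, hc0, hck, hstep⟩ := h3
  refine ⟨k + 1, fun i => if i = 0 then H else c (i - 1), by simp, by simp [hck], ?_⟩
  intro i hi
  rcases Nat.eq_zero_or_pos i with rfl | hpos
  · simpa [hc0] using ⟨h1, h2⟩
  · have h0 : ¬ (i = 0) := by omega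
    have h1' : ¬ (i + 1 = 0) := by omega
    simp only [h0, h1', if_false]
    have : i - 1 < k := by omega
    have := hstep (i - 1) this
    have e : i - 1 + 1 = i := by omega
    rw [e] at this
    have e2 : i + 1 - 1 = i := by omega
    rw [e2]
    exact this

lemma map_subtype_le_normalizer {J : Subgroup G} {A B : Subgroup ↥J}
    (hB : B ≤ Subgroup.normalizer (A : Set ↥J)) :
    Subgroup.map J.subtype B ≤ Subgroup.normalizer ((Subgroup.map J.subtype A : Subgroup G) : Set G) := by
  rintro x ⟨b, hb, rfl⟩
  rw [Subgroup.mem_normalizer_iff]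
  intro y
  constructor
  · rintro ⟨a, ha, rfl⟩
    refine ⟨b * a * b⁻¹, ?_, by simp [mul_assoc]⟩
    exact (Subgroup.mem_normalizer_iff.mp (hB hb) a).mp ha
  · rintro ⟨a, ha, heq⟩
    have hy : y = J.subtype (b⁻¹ * a * b) := by
      simp only [map_mul, map_inv]
      rw [heq]
      group
    rw [hy]
    refine ⟨b⁻¹ * a * b, ?_, rfl⟩
    have := (Subgroup.mem_normalizer_iff.mp (hB (B.inv_mem hb)) a).mp ha
    simpa [mul_assoc] using this

lemma map_subtype_top_eq (J : Subgroup G) : Subgroup.map J.subtype ⊤ = J := by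
  rw [← MonoidHom.range_eq_map, Subgroup.range_subtype]

lemma isSubnormal_of_subgroupOf {J H : Subgroup G} (hHJ : H ≤ J)
    (h1 : IsSubnormal (H.subgroupOf J)) (h2 : IsSubnormal J) : IsSubnormal H := by
  obtain ⟨k, c, hc0, hck, hcstep⟩ := h1
  obtain ⟨l, d, hd0, hdl, hdstep⟩ := h2
  refine ⟨k + l, fun i => if i < k then Subgroup.map J.subtype (c i) else d (i - k), ?_, ?_, ?_⟩
  · rcases Nat.eq_zero_or_pos k with hk | hk
    · subst hk
      simp only [Nat.lt_irrefl, if_false, Nat.sub_zero, hd0]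
      have htop : H.subgroupOf J = ⊤ := by rw [← hc0]; exact hck
      have hJH : J ≤ H := Subgroup.subgroupOf_eq_top.mp htop
      exact (le_antisymm hHJ hJH).symm
    · simp only [hk, if_true, hc0]
      rw [Subgroup.subgroupOf_map_subtype, inf_eq_left.mpr hHJ]
  · have : ¬ (k + l < k) := by omega
    simp only [this, if_false, Nat.add_sub_cancel_left, hdl]
  · intro i hi
    by_cases hik : i + 1 < k
    · have hik' : i < k := by omega
      simp only [hik, hik', if_true]
      obtain ⟨hle, hnorm⟩ := hcstep i (by omega)
      exact ⟨Subgroup.map_mono hle, map_subtype_le_normalizer hnorm⟩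
    · by_cases hik' : i < k
      -- i + 1 = k
      · have hk : i + 1 = k := by omega
        have e0 : i + 1 - k = 0 := by omega
        simp only [hik, hik', if_true, if_false, e0, hd0]
        obtain ⟨hle, hnorm⟩ := hcstep i (by omega)
        have htopnorm : (⊤ : Subgroup ↥J) ≤ Subgroup.normalizer (c i : Set ↥J) := by
          rw [← hck, ← hk]; exact hnorm
        constructor
        · exact le_trans (Subgroup.map_mono le_top) (le_of_eq (map_subtype_top_eq J))
        · exact le_trans (le_of_eq (map_subtype_top_eq J).symm)
            (map_subtype_le_normalizer htopnorm)
      · simp only [hik, hik', if_false]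
        have hstep := hdstep (i - k) (by omega)
        have e : i - k + 1 = i + 1 - k := by omega
        rw [e] at hstep
        exact hstep

lemma card_map_subtype (J : Subgroup G) (K : Subgroup ↥J) :
    Nat.card (Subgroup.map J.subtype K) = Nat.card K :=
  (Nat.card_congr (K.equivMapOfInjective _ J.subtype_injective).toEquiv).symm

lemma map_subtype_centralizer (J : Subgroup G) (K : Subgroup ↥J) :
    Subgroup.map J.subtype (Subgroup.centralizer (K : Set ↥J))
      = Subgroup.centralizer ((Subgroup.map J.subtype K : Subgroup G) : Set G) ⊓ J := by
  ext x
  constructor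
  · rintro ⟨c, hc, rfl⟩
    refine Subgroup.mem_inf.mpr ⟨?_, c.2⟩
    rw [Subgroup.mem_centralizer_iff]
    rintro y ⟨k, hk, rfl⟩
    have := hc k hk
    exact congrArg Subtype.val this
  · intro hx
    obtain ⟨hx1, hx2⟩ := Subgroup.mem_inf.mp hx
    refine ⟨⟨x, hx2⟩, ?_, rfl⟩
    intro k hk
    apply Subtype.ext
    exact hx1 (J.subtype k) ⟨k, hk, rfl⟩

lemma fm_le_fm_map [Finite G] (J : Subgroup G) (K : Subgroup ↥J) :
    fm K ≤ fm (Subgroup.map J.subtype K) := by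
  rw [fm, fm, ← card_map_subtype J K, ← card_map_subtype J (Subgroup.centralizer (K : Set ↥J)),
    map_subtype_centralizer]
  exact Nat.mul_le_mul_left _ (Subgroup.card_le_of_le inf_le_left)

lemma fm_subgroupOf_eq [Finite G] {H J : Subgroup G} (hHJ : H ≤ J)
    (hC : Subgroup.centralizer (H : Set G) ≤ J) :
    fm (H.subgroupOf J) = fm H := by
  have hmap : Subgroup.map J.subtype (H.subgroupOf J) = H := by
    rw [Subgroup.subgroupOf_map_subtype, inf_eq_left.mpr hHJ]
  rw [fm, fm, ← card_map_subtype J (H.subgroupOf J),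
    ← card_map_subtype J (Subgroup.centralizer ((H.subgroupOf J : Subgroup ↥J) : Set ↥J)),
    map_subtype_centralizer, hmap, inf_eq_left.mpr hC]

lemma index_lt_of_lt [Finite G] {H J : Subgroup G} (h : H < J) : J.index < H.index := by
  have h1 : H.relIndex J * J.index = H.index := Subgroup.relIndex_mul_index h.le
  have h2 : H.relIndex J ≠ 1 := by
    intro he
    exact h.ne (le_antisymm h.le (Subgroup.relIndex_eq_one.mp he))
  have h3 : H.relIndex J ≠ 0 := by
    show (H.subgroupOf J).index ≠ 0
    exact Subgroup.index_ne_zero_of_finite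
  have h4 : J.index ≠ 0 := Subgroup.index_ne_zero_of_finite
  have h5 : 2 ≤ H.relIndex J := by omega
  have := Nat.mul_le_mul_right J.index h5
  omega

lemma relindex_le_index [Finite G] {H J : Subgroup G} (h : H ≤ J) :
    H.relIndex J ≤ H.index := by
  have h1 : H.relIndex J * J.index = H.index := Subgroup.relIndex_mul_index h
  have h4 : J.index ≠ 0 := Subgroup.index_ne_zero_of_finite
  nlinarith [Nat.one_le_iff_ne_zero.mpr h4]

lemma card_lt_of_ne_top [Finite G] {J : Subgroup G} (h : J ≠ ⊤) :
    Nat.card ↥J < Nat.card G := by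
  have h1 : J.index * Nat.card J = Nat.card G := Subgroup.index_mul_card J
  have h2 : J.index ≠ 1 := fun e => h (Subgroup.index_eq_one.mp e)
  have h3 : J.index ≠ 0 := Subgroup.index_ne_zero_of_finite
  have h4 : 0 < Nat.card J := Nat.card_pos
  have h5 : 2 ≤ J.index := by omega
  nlinarith


set_option maxHeartbeats 1000000 in
lemma main : ∀ (n : ℕ) (G : Type u) [Group G] [Finite G] (H : Subgroup G),
    Nat.card G + H.index ≤ n → (∀ K : Subgroup G, fm K ≤ fm H) → IsSubnormal H := by
  intro n
  induction n using Nat.strong_induction_on with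
  | _ n ih =>
    intro G _ _ H hn hmax
    by_cases htop : H = ⊤
    · subst htop; exact isSubnormal_top
    set C := Subgroup.centralizer (H : Set G) with hC
    have hfmC : fm C = fm H := by
      refine le_antisymm (hmax C) ?_
      have hHCC : H ≤ Subgroup.centralizer (C : Set G) :=
        Subgroup.le_centralizer_iff.mpr le_rfl
      have hcard : Nat.card H ≤ Nat.card (Subgroup.centralizer (C : Set G)) :=
        Subgroup.card_le_of_le hHCC
      calc fm H = Nat.card H * Nat.card C := rfl
        _ = Nat.card C * Nat.card H := Nat.mul_comm _ _
        _ ≤ Nat.card C * Nat.card (Subgroup.centralizer (C : Set G)) :=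
            Nat.mul_le_mul_left _ hcard
        _ = fm C := rfl
    by_cases hCH : C ≤ H
    · by_cases hnorm : ∀ g : G, conjSub g H = H
      · exact isSubnormal_step le_top (normal_of_conjSub H hnorm) isSubnormal_top
      · push_neg at hnorm
        obtain ⟨g, hg⟩ := hnorm
        have hfmB : fm (conjSub g H) = fm H := fm_conjSub g H
        obtain ⟨hfmJ, hset⟩ := cd_join hmax rfl hfmB
        set J := H ⊔ conjSub g H with hJ
        have hJne : J ≠ ⊤ := by
          intro he
          apply hg
          apply conj_mul_eq_univ
          rw [← hset, he]
          exact Subgroup.coe_top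
        have hHJ : H ≤ J := le_sup_left
        have hHneJ : H ≠ J := by
          intro he
          have hBJ : conjSub g H ≤ H := le_trans (le_trans le_sup_right hJ.ge) he.ge
          exact hg (Subgroup.eq_of_le_of_card_ge hBJ (le_of_eq (card_conjSub g H).symm))
        have hJidx : J.index < H.index := index_lt_of_lt (lt_of_le_of_ne hHJ hHneJ)
        have hJsub : IsSubnormal J := by
          apply ih (Nat.card G + J.index) (by omega) G J le_rfl
          intro K; rw [hfmJ]; exact hmax K
        have hCJ : Subgroup.centralizer (H : Set G) ≤ J := le_trans hCH hHJ
        have hmax' : ∀ K : Subgroup ↥J, fm K ≤ fm (H.subgroupOf J) := by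
          intro K
          calc fm K ≤ fm (Subgroup.map J.subtype K) := fm_le_fm_map J K
            _ ≤ fm H := hmax _
            _ = fm (H.subgroupOf J) := (fm_subgroupOf_eq hHJ hCJ).symm
        have hcardJ : Nat.card ↥J < Nat.card G := card_lt_of_ne_top hJne
        have hrel : (H.subgroupOf J).index ≤ H.index := relindex_le_index hHJ
        have hHsubJ : IsSubnormal (H.subgroupOf J) := by
          apply ih (Nat.card ↥J + (H.subgroupOf J).index) (by omega) ↥J (H.subgroupOf J)
            le_rfl hmax'
        exact isSubnormal_of_subgroupOf hHJ hHsubJ hJsub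
    · obtain ⟨hfmJ, hset⟩ := cd_join hmax rfl hfmC
      set J := H ⊔ C with hJ
      have hHJ : H ≤ J := le_sup_left
      have hne : H ≠ J := by
        intro he
        exact hCH (le_trans (le_trans le_sup_right hJ.ge) he.ge)
      have hJnormH : J ≤ Subgroup.normalizer (H : Set G) :=
        sup_le Subgroup.le_normalizer (centralizer_le_normalizer H)
      have hJidx : J.index < H.index := index_lt_of_lt (lt_of_le_of_ne hHJ hne)
      have hJsub : IsSubnormal J := by
        apply ih (Nat.card G + J.index) (by omega) G J le_rfl
        intro K; rw [hfmJ]; exact hmax K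
      exact isSubnormal_step hHJ hJnormH hJsub

end CDWork

theorem stmt_6 {G : Type*} [Group G] [Finite G] (H : Subgroup G)
    (hH : IsCDSubgroup H) : IsSubnormal H := by
  have hmin : ∀ K : Subgroup G, cdMeasure H ≤ cdMeasure K := by
    intro K
    rw [IsCDSubgroup] at hH
    rw [hH]
    exact Nat.sInf_le ⟨K, rfl⟩
  have hid : ∀ K : Subgroup G, cdMeasure K * CDWork.fm K = Nat.card G * Nat.card G := by
    intro K
    have e1 : K.index * Nat.card K = Nat.card G := Subgroup.index_mul_card K
    have e2 : (Subgroup.centralizer (K : Set G)).index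
        * Nat.card (Subgroup.centralizer (K : Set G)) = Nat.card G :=
      Subgroup.index_mul_card _
    calc cdMeasure K * CDWork.fm K
        = (K.index * Nat.card K) * ((Subgroup.centralizer (K : Set G)).index
            * Nat.card (Subgroup.centralizer (K : Set G))) := by
          simp only [cdMeasure, CDWork.fm]; ring
      _ = Nat.card G * Nat.card G := by rw [e1, e2]
  have hpos : 0 < cdMeasure H := by
    simp only [cdMeasure]
    exact Nat.mul_pos (Nat.pos_of_ne_zero Subgroup.index_ne_zero_of_finite)
      (Nat.pos_of_ne_zero Subgroup.index_ne_zero_of_finite)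
  have hmax : ∀ K : Subgroup G, CDWork.fm K ≤ CDWork.fm H := by
    intro K
    have h1 : cdMeasure H * CDWork.fm K ≤ cdMeasure K * CDWork.fm K :=
      Nat.mul_le_mul_right _ (hmin K)
    rw [hid K, ← hid H] at h1
    exact Nat.le_of_mul_le_mul_left h1 hpos
  exact CDWork.main (Nat.card G + H.index) G H le_rfl hmax
end

section
/- Let G be a finite group such that G/Z(G) is a non-abelian simple group. Then the only CD-subgroups of G are G itself and the center Z(G), and μ(G) = |G:Z(G)|. -/
open Pointwise

namespace CDAux

open Subgroup

variable {G : Type*} [Group G] [Finite G]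

/-- The "multiplicative" Chermak–Delgado measure `|H| * |C_G(H)|`. -/
noncomputable def f (H : Subgroup G) : ℕ :=
  Nat.card H * Nat.card (centralizer (H : Set G))

lemma f_pos (H : Subgroup G) : 0 < f H :=
  Nat.mul_pos Nat.card_pos Nat.card_pos

lemma cdMeasure_mul_f (H : Subgroup G) :
    cdMeasure H * f H = Nat.card G * Nat.card G := by
  have h1 := Subgroup.card_mul_index H
  have h2 := Subgroup.card_mul_index (centralizer (H : Set G))
  show H.index * (centralizer (H : Set G)).index *
        (Nat.card H * Nat.card (centralizer (H : Set G))) = Nat.card G * Nat.card G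
  calc H.index * (centralizer (H : Set G)).index *
        (Nat.card H * Nat.card (centralizer (H : Set G)))
      = (Nat.card H * H.index) *
        (Nat.card (centralizer (H : Set G)) * (centralizer (H : Set G)).index) := by ring
    _ = Nat.card G * Nat.card G := by rw [h1, h2]

lemma cdMeasure_pos (H : Subgroup G) : 0 < cdMeasure H := by
  rcases Nat.eq_zero_or_pos (cdMeasure H) with h | h
  · exfalso
    have h1 := cdMeasure_mul_f H
    rw [h, zero_mul] at h1
    have h2 : 0 < Nat.card G * Nat.card G := Nat.mul_pos Nat.card_pos Nat.card_pos
    omega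
  · exact h

lemma cdMeasure_le_iff {M N : Subgroup G} :
    cdMeasure M ≤ cdMeasure N ↔ f N ≤ f M := by
  have hMN : cdMeasure M * f M = cdMeasure N * f N := by
    rw [cdMeasure_mul_f, cdMeasure_mul_f]
  constructor
  · intro h
    -- cdMeasure N * f N = cdMeasure M * f M ≤ cdMeasure N * f M
    have h1 : cdMeasure N * f N ≤ cdMeasure N * f M := by
      calc cdMeasure N * f N = cdMeasure M * f M := hMN.symm
        _ ≤ cdMeasure N * f M := Nat.mul_le_mul_right _ h
    exact Nat.le_of_mul_le_mul_left h1 (cdMeasure_pos N)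
  · intro h
    have h1 : f M * cdMeasure M ≤ f M * cdMeasure N := by
      calc f M * cdMeasure M = cdMeasure N * f N := by rw [mul_comm]; exact hMN
        _ ≤ cdMeasure N * f M := Nat.mul_le_mul_left _ h
        _ = f M * cdMeasure N := by ring
    exact Nat.le_of_mul_le_mul_left h1 (f_pos M)

lemma cdMeasure_eq_iff {M N : Subgroup G} :
    cdMeasure M = cdMeasure N ↔ f M = f N := by
  constructor
  · intro h
    exact le_antisymm (cdMeasure_le_iff.mp h.ge) (cdMeasure_le_iff.mp h.le)
  · intro h
    exact le_antisymm (cdMeasure_le_iff.mpr h.ge) (cdMeasure_le_iff.mpr h.le)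

/-- Cardinality formula for the set-product of two subgroups. -/
lemma card_set_mul (M N : Subgroup G) :
    Nat.card (↑M * ↑N : Set G) * Nat.card (M ⊓ N : Subgroup G) =
      Nat.card M * Nat.card N := by
  classical
  set K : Subgroup M := (M ⊓ N).subgroupOf M with hK
  have key : Nat.card (↑M * ↑N : Set G) = Nat.card (M ⧸ K) * Nat.card N := by
    have e : (M ⧸ K) × N ≃ (↑M * ↑N : Set G) := by
      refine Equiv.ofBijective
        (fun p => ⟨((p.1.out : M) : G) * (p.2 : G),
          Set.mul_mem_mul (SetLike.coe_mem (p.1.out : M)) (SetLike.coe_mem p.2)⟩) ⟨?_, ?_⟩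
      · rintro ⟨q, n⟩ ⟨q', n'⟩ h
        have h' : ((q.out : M) : G) * (n : G) = ((q'.out : M) : G) * (n' : G) :=
          congrArg Subtype.val h
        have hmm : ((q'.out : M) : G)⁻¹ * ((q.out : M) : G) = (n' : G) * (n : G)⁻¹ := by
          rw [eq_mul_inv_iff_mul_eq, mul_assoc, h', inv_mul_cancel_left]
        have hmem : ((q'.out : M) : G)⁻¹ * ((q.out : M) : G) ∈ M ⊓ N := by
          refine Subgroup.mem_inf.mpr ⟨?_, ?_⟩
          · exact mul_mem (inv_mem (SetLike.coe_mem (q'.out : M))) (SetLike.coe_mem (q.out : M))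
          · rw [hmm]; exact mul_mem (SetLike.coe_mem n') (inv_mem (SetLike.coe_mem n))
        have hq : q' = q := by
          rw [← QuotientGroup.out_eq' q, ← QuotientGroup.out_eq' q']
          apply QuotientGroup.eq.mpr
          rw [Subgroup.mem_subgroupOf]
          simpa using hmem
        subst hq
        have hn : (n : G) = (n' : G) := mul_left_cancel h'
        exact Prod.ext rfl (Subtype.ext hn)
      · rintro ⟨x, hx⟩
        rw [Set.mem_mul] at hx
        obtain ⟨a, ha, b, hb, hab⟩ := hx
        set q : M ⧸ K := QuotientGroup.mk ⟨a, ha⟩ with hqdef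
        have hout : ((q.out : M) : G)⁻¹ * a ∈ M ⊓ N := by
          have h1 : (QuotientGroup.mk q.out : M ⧸ K) = QuotientGroup.mk ⟨a, ha⟩ := by
            rw [QuotientGroup.out_eq' q]
          have h2 := QuotientGroup.eq.mp h1
          rw [Subgroup.mem_subgroupOf] at h2
          simpa using h2
        have hn' : ((q.out : M) : G)⁻¹ * a * b ∈ N := mul_mem hout.2 hb
        refine ⟨⟨q, ⟨((q.out : M) : G)⁻¹ * a * b, hn'⟩⟩, ?_⟩
        apply Subtype.ext
        show ((q.out : M) : G) * (((q.out : M) : G)⁻¹ * a * b) = x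
        rw [← hab]
        group
    calc Nat.card (↑M * ↑N : Set G) = Nat.card ((M ⧸ K) × N) := (Nat.card_congr e).symm
      _ = Nat.card (M ⧸ K) * Nat.card N := Nat.card_prod _ _
  have hMcard : Nat.card M = Nat.card (M ⧸ K) * Nat.card K :=
    Subgroup.card_eq_card_quotient_mul_card_subgroup K
  have hKcard : Nat.card K = Nat.card (M ⊓ N : Subgroup G) :=
    Nat.card_congr (Subgroup.subgroupOfEquivOfLe inf_le_left).toEquiv
  rw [key, hMcard, hKcard]
  ring

lemma mul_subset_sup (M N : Subgroup G) :
    (↑M * ↑N : Set G) ⊆ ↑(M ⊔ N) := by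
  rintro x hx
  rw [Set.mem_mul] at hx
  obtain ⟨a, ha, b, hb, rfl⟩ := hx
  exact mul_mem (le_sup_left (a := M) (b := N) ha) (le_sup_right (a := M) (b := N) hb)

lemma centralizer_sup (M N : Subgroup G) :
    centralizer ((M ⊔ N : Subgroup G) : Set G) =
      centralizer (M : Set G) ⊓ centralizer (N : Set G) := by
  apply le_antisymm
  · exact le_inf (centralizer_le (SetLike.coe_subset_coe.mpr le_sup_left))
      (centralizer_le (SetLike.coe_subset_coe.mpr le_sup_right))
  · rw [← Subgroup.le_centralizer_iff]
    exact sup_le (Subgroup.le_centralizer_iff.mp inf_le_left)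
      (Subgroup.le_centralizer_iff.mp inf_le_right)

lemma centralizer_mul_subset_centralizer_inf (M N : Subgroup G) :
    (↑(centralizer (M : Set G)) * ↑(centralizer (N : Set G)) : Set G) ⊆
      ↑(centralizer ((M ⊓ N : Subgroup G) : Set G)) := by
  have h1 : centralizer (M : Set G) ≤ centralizer ((M ⊓ N : Subgroup G) : Set G) :=
    centralizer_le (SetLike.coe_subset_coe.mpr inf_le_left)
  have h2 : centralizer (N : Set G) ≤ centralizer ((M ⊓ N : Subgroup G) : Set G) :=
    centralizer_le (SetLike.coe_subset_coe.mpr inf_le_right)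
  rintro x hx
  rw [Set.mem_mul] at hx
  obtain ⟨a, ha, b, hb, rfl⟩ := hx
  exact mul_mem (h1 ha) (h2 hb)

lemma card_set_mul_pos (s t : Set G) (hs : s.Nonempty) (ht : t.Nonempty) :
    0 < Nat.card (s * t : Set G) := by
  have h : (s * t).Nonempty := hs.mul ht
  have := h.to_subtype
  exact Nat.card_pos

/-- The key submultiplicativity chain, recorded with the exact intermediate
cardinalities so that the equality case can be extracted. -/
lemma f_mul_f_eq (M N : Subgroup G) :
    f M * f N =
      (Nat.card (↑M * ↑N : Set G) *
        Nat.card (↑(centralizer (M : Set G)) * ↑(centralizer (N : Set G)) : Set G)) *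
      (Nat.card (M ⊓ N : Subgroup G) *
        Nat.card (centralizer ((M ⊔ N : Subgroup G) : Set G))) := by
  have h1 := card_set_mul M N
  have h2 := card_set_mul (centralizer (M : Set G)) (centralizer (N : Set G))
  have h3 : Nat.card (centralizer ((M ⊔ N : Subgroup G) : Set G)) =
      Nat.card (centralizer (M : Set G) ⊓ centralizer (N : Set G) : Subgroup G) := by
    rw [centralizer_sup]
  show Nat.card M * Nat.card (centralizer (M : Set G)) *
        (Nat.card N * Nat.card (centralizer (N : Set G))) = _
  rw [h3]
  calc Nat.card M * Nat.card (centralizer (M : Set G)) *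
        (Nat.card N * Nat.card (centralizer (N : Set G)))
      = (Nat.card M * Nat.card N) *
        (Nat.card (centralizer (M : Set G)) * Nat.card (centralizer (N : Set G))) := by ring
    _ = (Nat.card (↑M * ↑N : Set G) * Nat.card (M ⊓ N : Subgroup G)) *
        (Nat.card (↑(centralizer (M : Set G)) * ↑(centralizer (N : Set G)) : Set G) *
          Nat.card (centralizer (M : Set G) ⊓ centralizer (N : Set G) : Subgroup G)) := by
        rw [h1, h2]
    _ = _ := by ring

lemma f_sup_decomp (M N : Subgroup G) :
    f (M ⊓ N) * f (M ⊔ N) =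
      (Nat.card (M ⊔ N : Subgroup G) *
        Nat.card (centralizer ((M ⊓ N : Subgroup G) : Set G))) *
      (Nat.card (M ⊓ N : Subgroup G) *
        Nat.card (centralizer ((M ⊔ N : Subgroup G) : Set G))) := by
  show Nat.card (M ⊓ N : Subgroup G) * Nat.card (centralizer ((M ⊓ N : Subgroup G) : Set G)) *
      (Nat.card (M ⊔ N : Subgroup G) * Nat.card (centralizer ((M ⊔ N : Subgroup G) : Set G))) = _
  ring

lemma card_mul_le_card_sup (M N : Subgroup G) :
    Nat.card (↑M * ↑N : Set G) ≤ Nat.card (M ⊔ N : Subgroup G) := by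
  have := Nat.card_mono (Set.toFinite ((M ⊔ N : Subgroup G) : Set G)) (mul_subset_sup M N)
  simpa using this

lemma card_cmul_le (M N : Subgroup G) :
    Nat.card (↑(centralizer (M : Set G)) * ↑(centralizer (N : Set G)) : Set G) ≤
      Nat.card (centralizer ((M ⊓ N : Subgroup G) : Set G)) := by
  have := Nat.card_mono
    (Set.toFinite ((centralizer ((M ⊓ N : Subgroup G) : Set G) : Subgroup G) : Set G))
    (centralizer_mul_subset_centralizer_inf M N)
  simpa using this

lemma f_le_f_inf_mul_f_sup (M N : Subgroup G) :
    f M * f N ≤ f (M ⊓ N) * f (M ⊔ N) := by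
  rw [f_mul_f_eq, f_sup_decomp]
  exact Nat.mul_le_mul_right _ (Nat.mul_le_mul (card_mul_le_card_sup M N) (card_cmul_le M N))

section Max

variable {F : ℕ} (hFmax : ∀ K : Subgroup G, f K ≤ F)

include hFmax in
/-- The lattice/equality-case lemma: if `M` and `N` both achieve the maximal
measure `F`, then so do `M ⊓ N` and `M ⊔ N`, and moreover `M * N = M ⊔ N`
as sets. -/
lemma member_inf_sup {M N : Subgroup G} (hM : f M = F) (hN : f N = F) :
    f (M ⊓ N) = F ∧ f (M ⊔ N) = F ∧ (↑M * ↑N : Set G) = ↑(M ⊔ N) := by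
  have hFpos : 0 < F := hM ▸ f_pos M
  have h1 : F * F ≤ f (M ⊓ N) * f (M ⊔ N) := by
    have h0 := f_le_f_inf_mul_f_sup M N
    rw [hM, hN] at h0
    exact h0
  have h2 : f (M ⊓ N) * f (M ⊔ N) ≤ F * F :=
    Nat.mul_le_mul (hFmax _) (hFmax _)
  have heq : f (M ⊓ N) * f (M ⊔ N) = F * F := le_antisymm h2 h1
  have hsup : f (M ⊔ N) = F := by
    have h3 : F * F ≤ F * f (M ⊔ N) := by
      calc F * F = f (M ⊓ N) * f (M ⊔ N) := heq.symm
        _ ≤ F * f (M ⊔ N) := Nat.mul_le_mul_right _ (hFmax _)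
    exact le_antisymm (hFmax _) (Nat.le_of_mul_le_mul_left h3 hFpos)
  have hinf : f (M ⊓ N) = F := by
    have h3 : F * F ≤ F * f (M ⊓ N) := by
      calc F * F = f (M ⊔ N) * f (M ⊓ N) := by rw [mul_comm] at heq; exact heq.symm
        _ ≤ F * f (M ⊓ N) := Nat.mul_le_mul_right _ (hFmax _)
    exact le_antisymm (hFmax _) (Nat.le_of_mul_le_mul_left h3 hFpos)
  refine ⟨hinf, hsup, ?_⟩
  -- extract equality of cardinalities from the chain
  have hchain : (Nat.card (↑M * ↑N : Set G) *
        Nat.card (↑(centralizer (M : Set G)) * ↑(centralizer (N : Set G)) : Set G)) *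
      (Nat.card (M ⊓ N : Subgroup G) *
        Nat.card (centralizer ((M ⊔ N : Subgroup G) : Set G))) =
      (Nat.card (M ⊔ N : Subgroup G) *
        Nat.card (centralizer ((M ⊓ N : Subgroup G) : Set G))) *
      (Nat.card (M ⊓ N : Subgroup G) *
        Nat.card (centralizer ((M ⊔ N : Subgroup G) : Set G))) := by
    rw [← f_mul_f_eq, ← f_sup_decomp, hM, hN, heq]
  have hpos : 0 < Nat.card (M ⊓ N : Subgroup G) *
      Nat.card (centralizer ((M ⊔ N : Subgroup G) : Set G)) :=
    Nat.mul_pos Nat.card_pos Nat.card_pos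
  have hAB : Nat.card (↑M * ↑N : Set G) *
        Nat.card (↑(centralizer (M : Set G)) * ↑(centralizer (N : Set G)) : Set G) =
      Nat.card (M ⊔ N : Subgroup G) *
        Nat.card (centralizer ((M ⊓ N : Subgroup G) : Set G)) :=
    Nat.eq_of_mul_eq_mul_right hpos hchain
  -- A * B = A' * B' with A ≤ A', B ≤ B' and positivity forces A = A'
  have hBpos : 0 <
      Nat.card (↑(centralizer (M : Set G)) * ↑(centralizer (N : Set G)) : Set G) :=
    card_set_mul_pos _ _ ⟨1, one_mem _⟩ ⟨1, one_mem _⟩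
  have hA : Nat.card (↑M * ↑N : Set G) = Nat.card (M ⊔ N : Subgroup G) := by
    have hle1 := card_mul_le_card_sup M N
    have hle2 := card_cmul_le M N
    -- A' * B ≤ A' * B' = A * B ≤ A' * B  so A * B = A' * B
    have h4 : Nat.card (M ⊔ N : Subgroup G) *
        Nat.card (↑(centralizer (M : Set G)) * ↑(centralizer (N : Set G)) : Set G) ≤
        Nat.card (↑M * ↑N : Set G) *
        Nat.card (↑(centralizer (M : Set G)) * ↑(centralizer (N : Set G)) : Set G) := by
      calc Nat.card (M ⊔ N : Subgroup G) *
            Nat.card (↑(centralizer (M : Set G)) * ↑(centralizer (N : Set G)) : Set G)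
          ≤ Nat.card (M ⊔ N : Subgroup G) *
            Nat.card (centralizer ((M ⊓ N : Subgroup G) : Set G)) :=
            Nat.mul_le_mul_left _ hle2
        _ = Nat.card (↑M * ↑N : Set G) *
            Nat.card (↑(centralizer (M : Set G)) * ↑(centralizer (N : Set G)) : Set G) :=
            hAB.symm
    have h5 : Nat.card (M ⊔ N : Subgroup G) ≤ Nat.card (↑M * ↑N : Set G) :=
      Nat.le_of_mul_le_mul_right h4 hBpos
    exact le_antisymm hle1 h5
  have hsubset := mul_subset_sup M N
  refine Set.eq_of_subset_of_ncard_le hsubset ?_ (Set.toFinite _)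
  rw [← Nat.card_coe_set_eq, ← Nat.card_coe_set_eq]
  have hcoe : Nat.card ((M ⊔ N : Subgroup G) : Set G) = Nat.card (M ⊔ N : Subgroup G) := rfl
  rw [hcoe, ← hA]

end Max

/-! ### Conjugation -/

/-- Conjugate of a subgroup. -/
def conjSub (g : G) (H : Subgroup G) : Subgroup G :=
  H.map (MulAut.conj g).toMonoidHom

lemma mem_conjSub {g x : G} {H : Subgroup G} :
    x ∈ conjSub g H ↔ ∃ h ∈ H, g * h * g⁻¹ = x := by
  simp only [conjSub, Subgroup.mem_map, MulEquiv.coe_toMonoidHom, MulAut.conj_apply]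

lemma conjSub_conjSub (g₁ g₂ : G) (H : Subgroup G) :
    conjSub g₁ (conjSub g₂ H) = conjSub (g₁ * g₂) H := by
  ext x
  simp only [mem_conjSub]
  constructor
  · rintro ⟨y, hy, rfl⟩
    obtain ⟨h, hh, rfl⟩ := mem_conjSub.mp hy
    exact ⟨h, hh, by group⟩
  · rintro ⟨h, hh, rfl⟩
    exact ⟨g₂ * h * g₂⁻¹, mem_conjSub.mpr ⟨h, hh, rfl⟩, by group⟩

lemma conjSub_self {g : G} {H : Subgroup G} (hg : g ∈ H) : conjSub g H = H := by
  ext x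
  rw [mem_conjSub]
  constructor
  · rintro ⟨h, hh, rfl⟩
    exact mul_mem (mul_mem hg hh) (inv_mem hg)
  · intro hx
    exact ⟨g⁻¹ * x * g, mul_mem (mul_mem (inv_mem hg) hx) hg, by group⟩

lemma card_conjSub (g : G) (H : Subgroup G) :
    Nat.card (conjSub g H) = Nat.card H :=
  (Nat.card_congr (Subgroup.equivMapOfInjective H _ (MulAut.conj g).injective).toEquiv).symm

lemma centralizer_conjSub (g : G) (H : Subgroup G) :
    centralizer ((conjSub g H : Subgroup G) : Set G) =
      conjSub g (centralizer (H : Set G)) := by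
  ext x
  rw [Subgroup.mem_centralizer_iff, mem_conjSub]
  constructor
  · intro hx
    refine ⟨g⁻¹ * x * g, ?_, by group⟩
    rw [Subgroup.mem_centralizer_iff]
    intro h hh
    have hmem : g * h * g⁻¹ ∈ (conjSub g H : Subgroup G) := mem_conjSub.mpr ⟨h, hh, rfl⟩
    have hcomm := hx _ hmem
    have h1 : g⁻¹ * ((g * h * g⁻¹) * x) * g = g⁻¹ * (x * (g * h * g⁻¹)) * g := by
      rw [hcomm]
    calc h * (g⁻¹ * x * g) = g⁻¹ * ((g * h * g⁻¹) * x) * g := by group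
      _ = g⁻¹ * (x * (g * h * g⁻¹)) * g := h1
      _ = (g⁻¹ * x * g) * h := by group
  · rintro ⟨c, hc, rfl⟩
    rw [Subgroup.mem_centralizer_iff] at hc
    intro y hy
    obtain ⟨h, hh, rfl⟩ := mem_conjSub.mp hy
    have hcomm := hc h hh
    calc (g * h * g⁻¹) * (g * c * g⁻¹) = g * (h * c) * g⁻¹ := by group
      _ = g * (c * h) * g⁻¹ := by rw [hcomm]
      _ = (g * c * g⁻¹) * (g * h * g⁻¹) := by group

lemma f_conjSub (g : G) (H : Subgroup G) : f (conjSub g H) = f H := by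
  show Nat.card (conjSub g H) * Nat.card (centralizer ((conjSub g H : Subgroup G) : Set G)) = _
  rw [centralizer_conjSub, card_conjSub, card_conjSub]
  rfl

lemma normal_of_conjSub_le {H : Subgroup G} (h : ∀ g : G, conjSub g H ≤ H) :
    H.Normal := by
  constructor
  intro n hn g
  exact h g (mem_conjSub.mpr ⟨n, hn, rfl⟩)

/-- A finite group is never the set-product of a proper subgroup with a
conjugate of itself. -/
lemma eq_top_of_mul_conj {H : Subgroup G} {g : G}
    (h : (↑H * ↑(conjSub g H) : Set G) = Set.univ) : H = ⊤ := by
  have hginv : g⁻¹ ∈ (↑H * ↑(conjSub g H) : Set G) := by rw [h]; exact Set.mem_univ _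
  rw [Set.mem_mul] at hginv
  obtain ⟨a, ha, b, hb, hab⟩ := hginv
  have hg_eq : g = b⁻¹ * a⁻¹ := by
    have h1 : (g⁻¹)⁻¹ = (a * b)⁻¹ := by rw [hab]
    simpa [mul_inv_rev] using h1
  have haH : a ∈ H := ha
  have hconj_eq : conjSub g H = conjSub b⁻¹ H := by
    rw [hg_eq, ← conjSub_conjSub, conjSub_self (inv_mem haH)]
  have hbH : b ∈ H := by
    have hb0 : b ∈ conjSub g H := hb
    rw [hconj_eq, mem_conjSub] at hb0
    obtain ⟨h', hh', hb'⟩ := hb0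
    rw [inv_inv] at hb'
    have hb'' : b⁻¹ * h' * b = b := hb'
    have hh2 : h' = b * (b⁻¹ * h' * b) * b⁻¹ := by group
    rw [hb''] at hh2
    have : h' = b := by simpa using hh2
    rwa [← this]
  have hconjH : conjSub g H = H := by
    rw [hconj_eq, conjSub_self (inv_mem hbH)]
  rw [hconjH] at h
  have hHH : (↑H * ↑H : Set G) = (H : Set G) := by
    apply le_antisymm
    · rintro x hx
      rw [Set.mem_mul] at hx
      obtain ⟨p, hp, q, hq, rfl⟩ := hx
      exact mul_mem hp hq
    · intro x hx
      exact ⟨1, one_mem _, x, hx, one_mul x⟩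
  rw [hHH] at h
  exact SetLike.coe_injective (by rw [h, Subgroup.coe_top])

/-! ### Center facts -/

lemma centralizer_center_eq_top : centralizer ((center G : Subgroup G) : Set G) = ⊤ :=
  Subgroup.centralizer_eq_top_iff_subset.mpr (fun _ h => h)

lemma centralizer_top_eq_center :
    centralizer ((⊤ : Subgroup G) : Set G) = center G := by
  rw [Subgroup.coe_top, Subgroup.centralizer_univ]

lemma f_top : f (⊤ : Subgroup G) = Nat.card G * Nat.card (center G) := by
  show Nat.card (⊤ : Subgroup G) * Nat.card (centralizer ((⊤ : Subgroup G) : Set G)) = _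
  rw [Subgroup.card_top, centralizer_top_eq_center]

lemma f_center : f (center G : Subgroup G) = Nat.card (center G) * Nat.card G := by
  show Nat.card (center G) * Nat.card (centralizer ((center G : Subgroup G) : Set G)) = _
  rw [centralizer_center_eq_top, Subgroup.card_top]

end CDAux

theorem stmt_8 {G : Type*} [Group G] [Finite G]
    (hsimple : IsSimpleGroup (G ⧸ Subgroup.center G))
    (hnonab : ¬ ∀ a b : G ⧸ Subgroup.center G, a * b = b * a) :
    (∀ H : Subgroup G, IsCDSubgroup H ↔ H = ⊤ ∨ H = Subgroup.center G) ∧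
      cdMu G = (Subgroup.center G).index := by
  classical
  open Subgroup CDAux in
  -- the center is proper
  have hZne : center G ≠ ⊤ := by
    intro hc
    apply hnonab
    intro a b
    obtain ⟨x, rfl⟩ := QuotientGroup.mk_surjective a
    obtain ⟨y, rfl⟩ := QuotientGroup.mk_surjective b
    have hx : (QuotientGroup.mk x : G ⧸ center G) = 1 := by
      rw [QuotientGroup.eq_one_iff]; rw [hc]; trivial
    have hy : (QuotientGroup.mk y : G ⧸ center G) = 1 := by
      rw [QuotientGroup.eq_one_iff]; rw [hc]; trivial
    rw [← QuotientGroup.mk_mul, ← QuotientGroup.mk_mul]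
    have hxy : (QuotientGroup.mk (x * y) : G ⧸ center G) = 1 := by
      rw [QuotientGroup.eq_one_iff]; rw [hc]; trivial
    have hyx : (QuotientGroup.mk (y * x) : G ⧸ center G) = 1 := by
      rw [QuotientGroup.eq_one_iff]; rw [hc]; trivial
    rw [hxy, hyx]
  -- normal subgroups containing the center are the center or the whole group
  have hcorr : ∀ T : Subgroup G, T.Normal → center G ≤ T → T = center G ∨ T = ⊤ := by
    intro T hTn hZT
    set φ := QuotientGroup.mk' (center G) with hφ
    have hsurj : Function.Surjective φ := QuotientGroup.mk'_surjective (center G)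
    have hmapn : (T.map φ).Normal := Subgroup.Normal.map hTn φ hsurj
    rcases hsimple.eq_bot_or_eq_top_of_normal (T.map φ) hmapn with hb | ht
    · left
      have hle : T ≤ center G := by
        intro t ht'
        have hmem : φ t ∈ T.map φ := Subgroup.mem_map_of_mem φ ht'
        rw [hb, Subgroup.mem_bot] at hmem
        exact (QuotientGroup.eq_one_iff t).mp hmem
      exact le_antisymm hle hZT
    · right
      have hcomap : Subgroup.comap φ (T.map φ) = T ⊔ center G := by
        rw [Subgroup.comap_map_eq, QuotientGroup.ker_mk']
      rw [ht, Subgroup.comap_top, sup_of_le_left hZT] at hcomap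
      exact hcomap.symm
  -- the infimum is attained
  have hset : {n : ℕ | ∃ H : Subgroup G, cdMeasure H = n}.Nonempty :=
    ⟨cdMeasure (⊤ : Subgroup G), ⊤, rfl⟩
  obtain ⟨H₀, hH₀⟩ : ∃ H₀ : Subgroup G, cdMeasure H₀ = cdMu G := Nat.sInf_mem hset
  have hmu_le : ∀ K : Subgroup G, cdMu G ≤ cdMeasure K := fun K => Nat.sInf_le ⟨K, rfl⟩
  set F := CDAux.f H₀ with hF
  have hFmax : ∀ K : Subgroup G, CDAux.f K ≤ F := by
    intro K
    have h1 : cdMeasure H₀ ≤ cdMeasure K := hH₀ ▸ hmu_le K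
    exact CDAux.cdMeasure_le_iff.mp h1
  have hmem_iff : ∀ H : Subgroup G, IsCDSubgroup H ↔ CDAux.f H = F := by
    intro H
    show cdMeasure H = cdMu G ↔ _
    rw [← hH₀]
    exact CDAux.cdMeasure_eq_iff
  -- every member contains the center
  have hmemZ : ∀ M : Subgroup G, CDAux.f M = F → center G ≤ M := by
    intro M hM
    have hC : centralizer ((M ⊔ center G : Subgroup G) : Set G) = centralizer (M : Set G) := by
      rw [CDAux.centralizer_sup, CDAux.centralizer_center_eq_top, inf_top_eq]
    have hfMZ : CDAux.f (M ⊔ center G) =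
        Nat.card (M ⊔ center G : Subgroup G) * Nat.card (centralizer (M : Set G)) := by
      show Nat.card (M ⊔ center G : Subgroup G) *
        Nat.card (centralizer ((M ⊔ center G : Subgroup G) : Set G)) = _
      rw [hC]
    have hge : CDAux.f M ≤ CDAux.f (M ⊔ center G) := by
      rw [hfMZ]
      show Nat.card M * Nat.card (centralizer (M : Set G)) ≤ _
      exact Nat.mul_le_mul_right _ (Subgroup.card_le_of_le le_sup_left)
    have heq : CDAux.f (M ⊔ center G) = F := le_antisymm (hFmax _) (hM ▸ hge)
    -- conclude |M ⊔ Z| = |M| hence M ⊔ Z = M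
    have hcard : Nat.card (M ⊔ center G : Subgroup G) ≤ Nat.card M := by
      have h1 : Nat.card (M ⊔ center G : Subgroup G) * Nat.card (centralizer (M : Set G)) =
          Nat.card M * Nat.card (centralizer (M : Set G)) := by
        rw [← hfMZ, heq, ← hM]; rfl
      exact Nat.le_of_eq (Nat.eq_of_mul_eq_mul_right Nat.card_pos h1)
    have hMeq : M = M ⊔ center G := Subgroup.eq_of_le_of_card_ge le_sup_left hcard
    calc center G ≤ M ⊔ center G := le_sup_right
      _ = M := hMeq.symm
  -- pick a member of maximal cardinality: it is normal, hence ⊤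
  have htop_mem : CDAux.f (⊤ : Subgroup G) = F := by
    obtain ⟨T, hTmem, hTmax⟩ : ∃ T : Subgroup G, CDAux.f T = F ∧
        ∀ K : Subgroup G, CDAux.f K = F → Nat.card K ≤ Nat.card T := by
      haveI : Nonempty {K : Subgroup G // CDAux.f K = F} := ⟨⟨H₀, rfl⟩⟩
      obtain ⟨⟨T, hT⟩, hmax⟩ := Finite.exists_max
        (fun K : {K : Subgroup G // CDAux.f K = F} => Nat.card K.1)
      exact ⟨T, hT, fun K hK => hmax ⟨K, hK⟩⟩
    have hTnormal : T.Normal := by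
      apply CDAux.normal_of_conjSub_le
      intro g
      have hconj : CDAux.f (CDAux.conjSub g T) = F := by rw [CDAux.f_conjSub]; exact hTmem
      have hsup := (CDAux.member_inf_sup hFmax hTmem hconj).2.1
      have hcard : Nat.card (T ⊔ CDAux.conjSub g T : Subgroup G) ≤ Nat.card T :=
        hTmax _ hsup
      have : T ⊔ CDAux.conjSub g T = T := (Subgroup.eq_of_le_of_card_ge le_sup_left hcard).symm
      calc CDAux.conjSub g T ≤ T ⊔ CDAux.conjSub g T := le_sup_right
        _ = T := this
    rcases hcorr T hTnormal (hmemZ T hTmem) with hTZ | hTtop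
    · -- T = center: then ⊤ is also a member, contradicting maximality unless center = ⊤
      exfalso
      have hfZ : CDAux.f (center G : Subgroup G) = F := hTZ ▸ hTmem
      have hftop : CDAux.f (⊤ : Subgroup G) = F := by
        rw [CDAux.f_top]
        rw [CDAux.f_center] at hfZ
        rw [← hfZ]; ring
      have hcard : Nat.card (⊤ : Subgroup G) ≤ Nat.card T := hTmax _ hftop
      have : T = ⊤ := by
        apply Subgroup.eq_of_le_of_card_ge le_top hcard
      rw [hTZ] at this
      exact hZne this
    · rw [← hTtop]; exact hTmem
  have hZ_mem : CDAux.f (center G : Subgroup G) = F := by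
    rw [CDAux.f_center]
    rw [CDAux.f_top] at htop_mem
    rw [← htop_mem]; ring
  -- no middle members
  have hmid : ∀ B : Subgroup G, CDAux.f B = F → B = ⊤ ∨ B = center G := by
    intro B hB
    by_cases hBtop : B = ⊤
    · exact Or.inl hBtop
    right
    -- pick a member ≠ ⊤ of maximal cardinality
    obtain ⟨H, ⟨hHmem, hHne⟩, hHmax⟩ : ∃ H : Subgroup G,
        (CDAux.f H = F ∧ H ≠ ⊤) ∧
        ∀ K : Subgroup G, CDAux.f K = F ∧ K ≠ ⊤ → Nat.card K ≤ Nat.card H := by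
      haveI hne : Nonempty {K : Subgroup G // CDAux.f K = F ∧ K ≠ ⊤} := ⟨⟨B, hB, hBtop⟩⟩
      obtain ⟨⟨H, hH⟩, hmax⟩ := Finite.exists_max
        (fun K : {K : Subgroup G // CDAux.f K = F ∧ K ≠ ⊤} => Nat.card K.1)
      exact ⟨H, hH, fun K hK => hmax ⟨K, hK⟩⟩
    have hHnormal : H.Normal := by
      apply CDAux.normal_of_conjSub_le
      intro g
      have hconj : CDAux.f (CDAux.conjSub g H) = F := by rw [CDAux.f_conjSub]; exact hHmem
      obtain ⟨-, hsup, hprod⟩ := CDAux.member_inf_sup hFmax hHmem hconj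
      have hPne : H ⊔ CDAux.conjSub g H ≠ ⊤ := by
        intro hPtop
        apply hHne
        apply CDAux.eq_top_of_mul_conj (g := g)
        rw [hprod, hPtop]
        rfl
      have hcard : Nat.card (H ⊔ CDAux.conjSub g H : Subgroup G) ≤ Nat.card H :=
        hHmax _ ⟨hsup, hPne⟩
      have hPH : H ⊔ CDAux.conjSub g H = H :=
        (Subgroup.eq_of_le_of_card_ge le_sup_left hcard).symm
      calc CDAux.conjSub g H ≤ H ⊔ CDAux.conjSub g H := le_sup_right
        _ = H := hPH
    have hHZ : H = center G := by
      rcases hcorr H hHnormal (hmemZ H hHmem) with h | h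
      · exact h
      · exact absurd h hHne
    -- B is squeezed: center ≤ B and |B| ≤ |H| = |center|
    have hcardB : Nat.card B ≤ Nat.card (center G : Subgroup G) := by
      have := hHmax B ⟨hB, hBtop⟩
      rwa [hHZ] at this
    exact (Subgroup.eq_of_le_of_card_ge (hmemZ B hB) hcardB).symm
  -- assemble the final statement
  have hcd_top : cdMeasure (⊤ : Subgroup G) = (center G).index := by
    show (⊤ : Subgroup G).index * (centralizer ((⊤ : Subgroup G) : Set G)).index = _
    rw [Subgroup.index_top, CDAux.centralizer_top_eq_center, one_mul]
  constructor
  · intro H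
    rw [hmem_iff H]
    constructor
    · intro h
      exact hmid H h
    · rintro (rfl | rfl)
      · exact htop_mem
      · exact hZ_mem
  · have h1 : IsCDSubgroup (⊤ : Subgroup G) := (hmem_iff ⊤).mpr htop_mem
    have h2 : cdMeasure (⊤ : Subgroup G) = cdMu G := h1
    rw [← h2, hcd_top]
end

section
/- Let p be a prime and let G be a non-abelian finite p-group. Then μ(G) = p² if and only if G contains an abelian subgroup of index p. -/
open Pointwise

/-- A group with a central subgroup of index `1` or `p` is commutative. -/
lemma auxComm {H : Type*} [Group H] {p : ℕ} (hp : p.Prime) (N : Subgroup H)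
    (hc : N ≤ Subgroup.center H) (hidx : N.index = 1 ∨ N.index = p) :
    ∀ a b : H, a * b = b * a := by
  haveI := Fact.mk hp
  haveI hNn : N.Normal := ⟨fun n hn g => by
    have h := (Subgroup.mem_center_iff.mp (hc hn) g).symm
    rw [← h, mul_assoc, mul_inv_cancel, mul_one]; exact hn⟩
  haveI hcy : IsCyclic (H ⧸ N) := by
    rcases hidx with h | h
    · rw [Subgroup.index_eq_one] at h
      subst h
      haveI := QuotientGroup.subsingleton_quotient_top (G := H)
      infer_instance
    · exact isCyclic_of_prime_card (by rw [← Subgroup.index_eq_card, h])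
  exact commutative_of_cyclic_center_quotient (QuotientGroup.mk' N)
    (by rwa [QuotientGroup.ker_mk'])

/-- If the center has index `p^2`, there is an abelian subgroup of index `p`. -/
lemma centerSq {G : Type*} [Group G] [Finite G] {p : ℕ} (hp : p.Prime)
    (hZ : (Subgroup.center G).index = p ^ 2) :
    ∃ A : Subgroup G, IsMulCommutative A ∧ A.index = p := by
  haveI := Fact.mk hp
  have hcard : Nat.card (G ⧸ Subgroup.center G) = p ^ 2 := by
    rw [← Subgroup.index_eq_card, hZ]
  obtain ⟨K, hK⟩ := Sylow.exists_subgroup_card_pow_prime (G := G ⧸ Subgroup.center G) p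
    (n := 1) (by rw [hcard, pow_one]; exact dvd_pow_self p two_ne_zero)
  rw [pow_one] at hK
  set A : Subgroup G := Subgroup.comap (QuotientGroup.mk' (Subgroup.center G)) K with hA
  have hKidx : K.index = p := by
    have h1 : Nat.card K * K.index = p ^ 2 := by rw [Subgroup.card_mul_index, hcard]
    rw [hK, sq] at h1
    exact Nat.eq_of_mul_eq_mul_left hp.pos h1
  have hAidx : A.index = p := by
    rw [hA, Subgroup.index_comap_of_surjective _ (QuotientGroup.mk'_surjective _), hKidx]
  have hZA : Subgroup.center G ≤ A := by
    intro z hz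
    have : QuotientGroup.mk' (Subgroup.center G) z = 1 := by
      rw [← MonoidHom.mem_ker, QuotientGroup.ker_mk']; exact hz
    simp only [hA, Subgroup.mem_comap, this, one_mem]
  have hcenterA : (Subgroup.center G).subgroupOf A ≤ Subgroup.center A := by
    rintro ⟨a, haA⟩ hmem
    rw [Subgroup.mem_subgroupOf] at hmem
    rw [Subgroup.mem_center_iff]
    intro g
    exact Subtype.ext (Subgroup.mem_center_iff.mp hmem g)
  have hrel : ((Subgroup.center G).subgroupOf A).index = p := by
    have h1 : (Subgroup.center G).relIndex A * A.index = (Subgroup.center G).index :=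
      Subgroup.relIndex_mul_index hZA
    rw [hAidx, hZ, sq] at h1
    have : (Subgroup.center G).relIndex A = p := Nat.eq_of_mul_eq_mul_right hp.pos h1
    exact this
  have hcomm := auxComm hp _ hcenterA (Or.inr hrel)
  exact ⟨A, ⟨⟨fun a b => hcomm a b⟩⟩, hAidx⟩

theorem stmt_14 {G : Type*} [Group G] [Finite G] (p : ℕ) (hp : p.Prime)
    (hpG : IsPGroup p G) (hnonab : ¬ ∀ a b : G, a * b = b * a) :
    cdMu G = p ^ 2 ↔ ∃ A : Subgroup G, IsMulCommutative A ∧ A.index = p := by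
  haveI := Fact.mk hp
  -- center is not of index 1 or p
  have hZbig : ¬ ((Subgroup.center G).index = 1 ∨ (Subgroup.center G).index = p) :=
    fun h => hnonab (auxComm hp _ le_rfl h)
  -- if the centralizer of H is everything, H is central
  have hcentral : ∀ H : Subgroup G, (Subgroup.centralizer (H : Set G)).index = 1 →
      H ≤ Subgroup.center G := by
    intro H h1 x hx
    rw [Subgroup.index_eq_one] at h1
    rw [Subgroup.mem_center_iff]
    intro g
    have hg : g ∈ Subgroup.centralizer (H : Set G) := h1 ▸ Subgroup.mem_top g
    exact (Subgroup.mem_centralizer_iff.mp hg x hx).symm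
  -- extraction: from a subgroup of measure p^2, get an abelian subgroup of index p
  have hextract : ∀ H : Subgroup G, cdMeasure H = p ^ 2 →
      ∃ A : Subgroup G, IsMulCommutative A ∧ A.index = p := by
    intro H hm
    obtain ⟨a, ha⟩ := hpG.index H
    obtain ⟨b, hb⟩ := hpG.index (Subgroup.centralizer (H : Set G))
    rw [cdMeasure, ha, hb, ← pow_add] at hm
    have hab : a + b = 2 := Nat.pow_right_injective hp.two_le hm
    have ha2 : a ≤ 2 := by omega
    interval_cases a
    · -- H = ⊤, center has index p^2
      rw [pow_zero, Subgroup.index_eq_one] at ha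
      subst ha
      have hcen : Subgroup.centralizer ((⊤ : Subgroup G) : Set G) = Subgroup.center G := by
        rw [Subgroup.coe_top, Subgroup.centralizer_univ]
      refine centerSq hp ?_
      have hb2 : b = 2 := by omega
      rw [← hcen, hb, hb2]
    · -- H and its centralizer both of index p : centralizer is abelian of index p
      have hb1 : b = 1 := by omega
      rw [pow_one] at ha
      set K := Subgroup.centralizer (H : Set G) with hKdef
      have hKidx : K.index = p := by rw [hb, hb1, pow_one]
      set M := H ⊓ K with hM
      have hMK : M ≤ K := inf_le_right
      have hMc : M.subgroupOf K ≤ Subgroup.center K := by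
        rintro ⟨k, hkK⟩ hmem
        rw [Subgroup.mem_subgroupOf] at hmem
        have hkH : k ∈ H := hmem.1
        rw [Subgroup.mem_center_iff]
        rintro ⟨g, hgK⟩
        have h := Subgroup.mem_centralizer_iff.mp hgK k hkH
        exact Subtype.ext h.symm
      have hMidx : (M.subgroupOf K).index = 1 ∨ (M.subgroupOf K).index = p := by
        obtain ⟨n, hn⟩ := (hpG.to_subgroup K).index (M.subgroupOf K)
        have hrel : M.relIndex K * K.index = M.index := Subgroup.relIndex_mul_index hMK
        have hMle : M.index ≤ p * p := by
          calc M.index ≤ H.index * K.index := Subgroup.index_inf_le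
          _ = p * p := by rw [ha, hKidx]
        have h2 : M.relIndex K * K.index ≤ p * p := by rw [hrel]; exact hMle
        rw [hKidx] at h2
        have h3 : M.relIndex K ≤ p := Nat.le_of_mul_le_mul_right h2 hp.pos
        have h4 : (M.subgroupOf K).index ≤ p := h3
        rw [hn] at h4 ⊢
        have hn1 : n ≤ 1 := by
          by_contra hc
          push_neg at hc
          exact absurd h4 (not_le.mpr (lt_of_lt_of_le (by
            calc p = p ^ 1 := (pow_one p).symm
            _ < p ^ 2 := Nat.pow_lt_pow_right hp.one_lt one_lt_two) (Nat.pow_le_pow_right hp.pos hc)))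
        interval_cases n
        · left; rw [pow_zero]
        · right; rw [pow_one]
      have hcomm := auxComm hp _ hMc hMidx
      exact ⟨K, ⟨⟨fun a b => hcomm a b⟩⟩, hKidx⟩
    · -- H central of index p^2
      have hb0 : b = 0 := by omega
      rw [hb0, pow_zero] at hb
      have hHZ : H ≤ Subgroup.center G := hcentral H hb
      have hdvd : (Subgroup.center G).index ∣ p ^ 2 := by
        rw [← ha]; exact Subgroup.index_dvd_of_le hHZ
      obtain ⟨c, hc2, hcz⟩ := (Nat.dvd_prime_pow hp).mp hdvd
      interval_cases c
      · exact absurd (Or.inl (by rw [hcz, pow_zero])) hZbig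
      · exact absurd (Or.inr (by rw [hcz, pow_one])) hZbig
      · exact centerSq hp hcz
  -- every measure is a power of p, and never 1 or p
  have hpow : ∀ H : Subgroup G, ∃ n : ℕ, cdMeasure H = p ^ n := by
    intro H
    obtain ⟨a, ha⟩ := hpG.index H
    obtain ⟨b, hb⟩ := hpG.index (Subgroup.centralizer (H : Set G))
    exact ⟨a + b, by rw [cdMeasure, ha, hb, pow_add]⟩
  have hnotsmall : ∀ H : Subgroup G, cdMeasure H ≠ 1 ∧ cdMeasure H ≠ p := by
    intro H
    constructor
    · intro h1
      rw [cdMeasure] at h1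
      have hH1 : H.index = 1 := Nat.eq_one_of_mul_eq_one_right h1
      have hC1 : (Subgroup.centralizer (H : Set G)).index = 1 :=
        Nat.eq_one_of_mul_eq_one_left h1
      have hHZ : H ≤ Subgroup.center G := hcentral H hC1
      exact hZbig (Or.inl (Nat.eq_one_of_dvd_one
        (hH1 ▸ Subgroup.index_dvd_of_le hHZ)))
    · intro h1
      obtain ⟨a, ha⟩ := hpG.index H
      obtain ⟨b, hb⟩ := hpG.index (Subgroup.centralizer (H : Set G))
      rw [cdMeasure, ha, hb, ← pow_add] at h1
      have hab : a + b = 1 := by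
        have := Nat.pow_right_injective hp.two_le (h1.trans (pow_one p).symm)
        exact this
      rcases Nat.eq_zero_or_pos a with h0 | h1'
      · -- H = ⊤, center of index p
        subst h0
        rw [pow_zero, Subgroup.index_eq_one] at ha
        subst ha
        have hcen : Subgroup.centralizer ((⊤ : Subgroup G) : Set G) = Subgroup.center G := by
          rw [Subgroup.coe_top, Subgroup.centralizer_univ]
        refine hZbig (Or.inr ?_)
        rw [← hcen, hb]
        simp at hab
        rw [hab, pow_one]
      · -- centralizer = ⊤, H central of index p
        have hbz : b = 0 := by omega
        have haz : a = 1 := by omega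
        subst hbz
        rw [pow_zero] at hb
        have hHZ : H ≤ Subgroup.center G := hcentral H hb
        have hdvd : (Subgroup.center G).index ∣ p := by
          rw [← (by rw [ha, haz, pow_one] : H.index = p)]
          exact Subgroup.index_dvd_of_le hHZ
        rcases (Nat.dvd_prime hp).mp hdvd with h | h
        · exact hZbig (Or.inl h)
        · exact hZbig (Or.inr h)
  constructor
  · intro hmu
    have hne : {n : ℕ | ∃ H : Subgroup G, cdMeasure H = n}.Nonempty :=
      ⟨cdMeasure (⊤ : Subgroup G), ⊤, rfl⟩
    have hmem := Nat.sInf_mem hne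
    rw [show sInf {n : ℕ | ∃ H : Subgroup G, cdMeasure H = n} = cdMu G from rfl, hmu] at hmem
    obtain ⟨H, hH⟩ := hmem
    exact hextract H hH
  · rintro ⟨A, hAcomm, hAidx⟩
    -- compute cdMeasure A = p^2
    have hAle : A ≤ Subgroup.centralizer (A : Set G) := by haveI := hAcomm; exact Subgroup.le_centralizer A
    have hCdvd : (Subgroup.centralizer (A : Set G)).index ∣ p := by
      rw [← hAidx]; exact Subgroup.index_dvd_of_le hAle
    have hCidx : (Subgroup.centralizer (A : Set G)).index = p := by
      rcases (Nat.dvd_prime hp).mp hCdvd with h | h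
      · exfalso
        have hAZ := hcentral A h
        have hdv : (Subgroup.center G).index ∣ p := hAidx ▸ Subgroup.index_dvd_of_le hAZ
        rcases (Nat.dvd_prime hp).mp hdv with h' | h'
        · exact hZbig (Or.inl h')
        · exact hZbig (Or.inr h')
      · exact h
    have hmA : cdMeasure A = p ^ 2 := by rw [cdMeasure, hAidx, hCidx, sq]
    have hle : cdMu G ≤ p ^ 2 := Nat.sInf_le ⟨A, hmA⟩
    have hne : {n : ℕ | ∃ H : Subgroup G, cdMeasure H = n}.Nonempty := ⟨cdMeasure A, A, rfl⟩
    have hmem := Nat.sInf_mem hne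
    obtain ⟨H, hH⟩ := hmem
    obtain ⟨n, hn⟩ := hpow H
    obtain ⟨h1, h2⟩ := hnotsmall H
    have hmuH : cdMu G = cdMeasure H := hH.symm
    rw [hmuH, hn] at hle ⊢
    rw [hn] at h1 h2
    have hn2 : n ≤ 2 := (Nat.pow_le_pow_iff_right hp.one_lt).mp hle
    interval_cases n
    · exact absurd (pow_zero p) h1
    · exact absurd (pow_one p) h2
    · rfl
end

section
/- Let p be a prime and let G be a non-abelian finite p-group. Then μ(G) = p³ if and only if G contains no abelian subgroup of index p and |G:Z(G)| = p³. -/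
open Pointwise

section Aux
variable {G : Type*} [Group G]

private lemma aux_eq_of_le_of_index_eq [Finite G] {H K : Subgroup G}
    (h : H ≤ K) (he : H.index = K.index) : H = K := by
  have h2 : K.index ≠ 0 := Subgroup.index_ne_zero_of_finite
  have h1 : H.relIndex K * K.index = 1 * K.index := by
    rw [one_mul, Subgroup.relIndex_mul_index h, he]
  exact le_antisymm h (Subgroup.relIndex_eq_one.mp
    (Nat.eq_of_mul_eq_mul_right (Nat.pos_of_ne_zero h2) h1))

private lemma aux_sup_comm {A : Subgroup G} (hA : IsMulCommutative A)
    {x : G} (hx : x ∈ Subgroup.centralizer (A : Set G)) :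
    IsMulCommutative ↥(A ⊔ Subgroup.zpowers x) := by
  haveI := hA
  have hgen : A ⊔ Subgroup.zpowers x = Subgroup.closure ((A : Set G) ∪ {x}) := by
    rw [Subgroup.closure_union, Subgroup.closure_eq, Subgroup.zpowers_eq_closure]
  have hcomm : ∀ a ∈ (A : Set G) ∪ {x}, ∀ b ∈ (A : Set G) ∪ {x}, a * b = b * a := by
    rintro a (ha | rfl) b (hb | rfl)
    · exact Subgroup.mul_comm_of_mem_isMulCommutative (H := A) ha hb
    · exact Subgroup.mem_centralizer_iff.mp hx a ha
    · exact (Subgroup.mem_centralizer_iff.mp hx b hb).symm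
    · rfl
  rw [hgen]
  letI := Subgroup.closureCommGroupOfComm hcomm
  exact ⟨⟨mul_comm⟩⟩

private lemma aux_inf_le_center (H : Subgroup G)
    (htop : H ⊔ Subgroup.centralizer (H : Set G) = ⊤) :
    H ⊓ Subgroup.centralizer (H : Set G) ≤ Subgroup.center G := by
  set C := Subgroup.centralizer (H : Set G) with hC
  have h1 : H ≤ Subgroup.centralizer ((H ⊓ C : Subgroup G) : Set G) :=
    (Subgroup.le_centralizer_iff.mp le_rfl).trans
      (Subgroup.centralizer_le (SetLike.coe_subset_coe.mpr inf_le_right))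
  have h2 : C ≤ Subgroup.centralizer ((H ⊓ C : Subgroup G) : Set G) :=
    Subgroup.centralizer_le (SetLike.coe_subset_coe.mpr inf_le_left)
  have h3 : Subgroup.centralizer ((H ⊓ C : Subgroup G) : Set G) = ⊤ :=
    top_le_iff.mp (htop ▸ sup_le h1 h2)
  intro x hx
  exact Subgroup.centralizer_eq_top_iff_subset.mp h3 hx

private lemma aux_sup_eq_top [Finite G] {p : ℕ} (hp : p.Prime) {M K : Subgroup G}
    (hMi : M.index = p) (hKM : ¬ K ≤ M) : M ⊔ K = ⊤ := by
  have h1 : (M ⊔ K).index ∣ p := hMi ▸ Subgroup.index_dvd_of_le le_sup_left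
  rcases hp.eq_one_or_self_of_dvd _ h1 with h | h
  · exact Subgroup.index_eq_one.mp h
  · exfalso
    have he : M = M ⊔ K := aux_eq_of_le_of_index_eq le_sup_left (by rw [hMi, h])
    exact hKM (by rw [he]; exact le_sup_right)

private lemma aux_nested [Finite G] {p : ℕ} (hp : p.Prime) {A M : Subgroup G}
    (hA : IsMulCommutative A) (hAM : A ≤ M) (hAi : A.index = p ^ 2) (hMi : M.index = p)
    (hMC : M ≤ Subgroup.centralizer (A : Set G)) :
    ∃ D : Subgroup G, IsMulCommutative D ∧ D.index = p := by
  have hAne : A ≠ M := by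
    intro h
    rw [h, hMi] at hAi
    have := Nat.pow_right_injective hp.two_le (by rw [← hAi, pow_one] : p ^ 1 = p ^ 2)
    omega
  obtain ⟨x, hxM, hxA⟩ := SetLike.exists_of_lt (lt_of_le_of_ne hAM hAne)
  refine ⟨A ⊔ Subgroup.zpowers x, aux_sup_comm hA (hMC hxM), ?_⟩
  have hled : A ≤ A ⊔ Subgroup.zpowers x := le_sup_left
  have hDM : A ⊔ Subgroup.zpowers x ≤ M := sup_le hAM (Subgroup.zpowers_le.mpr hxM)
  have h1 : (A ⊔ Subgroup.zpowers x).index ∣ p ^ 2 := hAi ▸ Subgroup.index_dvd_of_le hled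
  obtain ⟨k, hk2, hk⟩ := (Nat.dvd_prime_pow hp).mp h1
  have hpd : p ∣ (A ⊔ Subgroup.zpowers x).index := hMi ▸ Subgroup.index_dvd_of_le hDM
  rcases k with _ | _ | _ | k
  · rw [pow_zero] at hk
    rw [hk] at hpd
    exact absurd (Nat.eq_one_of_dvd_one hpd) hp.one_lt.ne'
  · rw [hk, pow_one]
  · exfalso
    have he : A = A ⊔ Subgroup.zpowers x :=
      aux_eq_of_le_of_index_eq hled (by rw [hAi, hk])
    have hxD : x ∈ A ⊔ Subgroup.zpowers x :=
      (le_sup_right : Subgroup.zpowers x ≤ A ⊔ Subgroup.zpowers x) (Subgroup.mem_zpowers x)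
    rw [← he] at hxD
    exact hxA hxD
  · omega

end Aux

theorem stmt_15 {G : Type*} [Group G] [Finite G] (p : ℕ) (hp : p.Prime)
    (hpG : IsPGroup p G) (hnonab : ¬ ∀ a b : G, a * b = b * a) :
    cdMu G = p ^ 3 ↔
      (¬ ∃ A : Subgroup G, IsMulCommutative A ∧ A.index = p) ∧
        (Subgroup.center G).index = p ^ 3 := by
  haveI := Fact.mk hp
  obtain ⟨n, hcard⟩ := IsPGroup.iff_card.mp hpG
  have hp1 : 1 < p := hp.one_lt
  have hmu_le : ∀ H : Subgroup G, cdMu G ≤ cdMeasure H := fun H => Nat.sInf_le ⟨H, rfl⟩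
  have hZmed : cdMeasure (Subgroup.center G) = (Subgroup.center G).index := by
    unfold cdMeasure
    rw [Subgroup.centralizer_eq_top_iff_subset.mpr (fun x hx => hx), Subgroup.index_top, mul_one]
  have hmu_mem : ∃ H : Subgroup G, cdMeasure H = cdMu G :=
    Nat.sInf_mem (⟨cdMeasure ⊥, ⊥, rfl⟩ : {n : ℕ | ∃ H : Subgroup G, cdMeasure H = n}.Nonempty)
  have hdec : ∀ H : Subgroup G, ∃ i j : ℕ,
      H.index = p ^ i ∧ (Subgroup.centralizer (H : Set G)).index = p ^ j := by
    intro H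
    obtain ⟨i, _, hi⟩ := (Nat.dvd_prime_pow hp).mp (hcard ▸ H.index_dvd_card)
    obtain ⟨j, _, hj⟩ :=
      (Nat.dvd_prime_pow hp).mp (hcard ▸ (Subgroup.centralizer (H : Set G)).index_dvd_card)
    exact ⟨i, j, hi, hj⟩
  have hZdvd : ¬ (Subgroup.center G).index ∣ p := by
    intro hdvd
    rcases hp.eq_one_or_self_of_dvd _ hdvd with h | h
    · have htop := Subgroup.index_eq_one.mp h
      refine hnonab fun a b => ?_
      have hb : b ∈ Subgroup.center G := by rw [htop]; trivial
      exact (Subgroup.mem_center_iff.mp hb a)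
    · haveI : IsCyclic (G ⧸ Subgroup.center G) :=
        isCyclic_of_prime_card (p := p) (by rw [← Subgroup.index_eq_card]; exact h)
      exact hnonab (commutative_of_cyclic_center_quotient (QuotientGroup.mk' _)
        (le_of_eq (QuotientGroup.ker_mk' _)))
  have hp3ne : ¬ p ^ 3 ≤ p ^ 2 := by
    intro h
    exact absurd ((Nat.pow_le_pow_iff_right hp1).mp h) (by omega)
  constructor
  · intro hmu
    have hnoA : ¬ ∃ A : Subgroup G, IsMulCommutative A ∧ A.index = p := by
      rintro ⟨A, hA, hAi⟩
      haveI := hA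
      have hle : A ≤ Subgroup.centralizer (A : Set G) := Subgroup.le_centralizer A
      have hdvd : (Subgroup.centralizer (A : Set G)).index ∣ p :=
        hAi ▸ Subgroup.index_dvd_of_le hle
      have h1 : cdMeasure A ≤ p ^ 2 := by
        unfold cdMeasure
        rw [hAi, pow_two]
        exact Nat.mul_le_mul_left p (Nat.le_of_dvd hp.pos hdvd)
      exact hp3ne (le_trans (hmu ▸ hmu_le A) h1)
    refine ⟨hnoA, ?_⟩
    have hge : p ^ 3 ≤ (Subgroup.center G).index := by
      calc p ^ 3 = cdMu G := hmu.symm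
        _ ≤ cdMeasure (Subgroup.center G) := hmu_le _
        _ = _ := hZmed
    obtain ⟨H, hH⟩ := hmu_mem
    obtain ⟨i, j, hi, hj⟩ := hdec H
    have hmeas : cdMeasure H = p ^ (i + j) := by
      unfold cdMeasure; rw [hi, hj, pow_add]
    have hij : i + j = 3 :=
      Nat.pow_right_injective hp.two_le
        (show p ^ (i + j) = p ^ 3 by rw [← hmeas, hH, hmu])
    have hApos : ∀ K : Subgroup G, 0 < K.index :=
      fun K => Nat.pos_of_ne_zero Subgroup.index_ne_zero_of_finite
    have hi3 : i ≤ 3 := by omega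
    -- case analysis on i
    interval_cases i
    · -- i = 0 : H = ⊤, centralizer = center, j = 3
      have hHt : H = ⊤ := Subgroup.index_eq_one.mp (by rw [hi, pow_zero])
      have hc : Subgroup.centralizer (H : Set G) = Subgroup.center G := by
        rw [hHt, Subgroup.coe_top, Subgroup.centralizer_univ]
      rw [hc] at hj
      rw [hj]
      congr 1
      omega
    · -- i = 1, j = 2
      have hj2 : j = 2 := by omega
      rw [pow_one] at hi
      rw [hj2] at hj
      set C := Subgroup.centralizer (H : Set G) with hCdef
      by_cases hCH : C ≤ H
      · exfalso
        have hC_ab : IsMulCommutative C :=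
          Subgroup.le_centralizer_iff_isMulCommutative.mp
            ((Subgroup.centralizer_le (SetLike.coe_subset_coe.mpr hCH)) :
              C ≤ Subgroup.centralizer (C : Set G))
        have hHle : H ≤ Subgroup.centralizer (C : Set G) := Subgroup.le_centralizer_iff.mp le_rfl
        exact hnoA (aux_nested hp hC_ab hCH hj hi hHle)
      · have htop : H ⊔ C = ⊤ := aux_sup_eq_top hp hi hCH
        have hZle : H ⊓ C ≤ Subgroup.center G := aux_inf_le_center H htop
        refine le_antisymm ?_ hge
        calc (Subgroup.center G).index ≤ (H ⊓ C).index :=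
              Nat.le_of_dvd (hApos _) (Subgroup.index_dvd_of_le hZle)
          _ ≤ H.index * C.index := Subgroup.index_inf_le
          _ = p ^ 3 := by rw [hi, hj]; ring
    · -- i = 2, j = 1
      have hj1 : j = 1 := by omega
      rw [hj1, pow_one] at hj
      set C := Subgroup.centralizer (H : Set G) with hCdef
      by_cases hHC : H ≤ C
      · exfalso
        have hH_ab : IsMulCommutative H := Subgroup.le_centralizer_iff_isMulCommutative.mp hHC
        exact hnoA (aux_nested hp hH_ab hHC hi hj le_rfl)
      · have htop : C ⊔ H = ⊤ := aux_sup_eq_top hp hj hHC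
        have htop' : H ⊔ C = ⊤ := by rw [sup_comm]; exact htop
        have hZle : H ⊓ C ≤ Subgroup.center G := aux_inf_le_center H htop'
        refine le_antisymm ?_ hge
        calc (Subgroup.center G).index ≤ (H ⊓ C).index :=
              Nat.le_of_dvd (hApos _) (Subgroup.index_dvd_of_le hZle)
          _ ≤ H.index * C.index := Subgroup.index_inf_le
          _ = p ^ 3 := by rw [hi, hj]; ring
    · -- i = 3, j = 0 : H ≤ center
      have hj0 : j = 0 := by omega
      have hct : Subgroup.centralizer (H : Set G) = ⊤ :=
        Subgroup.index_eq_one.mp (by rw [hj, hj0, pow_zero])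
      have hHZ : H ≤ Subgroup.center G :=
        fun x hx => Subgroup.centralizer_eq_top_iff_subset.mp hct hx
      refine le_antisymm ?_ hge
      calc (Subgroup.center G).index ≤ H.index :=
            Nat.le_of_dvd (hApos _) (Subgroup.index_dvd_of_le hHZ)
        _ = p ^ 3 := hi
  · rintro ⟨hnoA2, hZ3⟩
    have hle : cdMu G ≤ p ^ 3 := by rw [← hZ3, ← hZmed]; exact hmu_le _
    obtain ⟨H, hH⟩ := hmu_mem
    obtain ⟨i, j, hi, hj⟩ := hdec H
    have hmeas : cdMu G = p ^ (i + j) := by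
      rw [← hH]; unfold cdMeasure; rw [hi, hj, pow_add]
    have hij3 : i + j ≤ 3 :=
      (Nat.pow_le_pow_iff_right hp1).mp (by rw [← hmeas]; exact hle)
    have hApos : ∀ K : Subgroup G, 0 < K.index :=
      fun K => Nat.pos_of_ne_zero Subgroup.index_ne_zero_of_finite
    suffices h3 : i + j = 3 by rw [hmeas, h3]
    by_contra hne
    have hij2 : i + j ≤ 2 := by omega
    -- derive contradictions for each small case
    have hHZ_of_j0 : j = 0 → H ≤ Subgroup.center G := by
      intro hj0
      have hct : Subgroup.centralizer (H : Set G) = ⊤ :=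
        Subgroup.index_eq_one.mp (by rw [hj, hj0, pow_zero])
      exact fun x hx => Subgroup.centralizer_eq_top_iff_subset.mp hct hx
    have hZdvd_of_j0 : j = 0 → (Subgroup.center G).index ∣ p ^ i := by
      intro hj0
      exact hi ▸ Subgroup.index_dvd_of_le (hHZ_of_j0 hj0)
    have hZeq_of_i0 : i = 0 → (Subgroup.center G).index = p ^ j := by
      intro hi0
      have hHt : H = ⊤ := Subgroup.index_eq_one.mp (by rw [hi, hi0, pow_zero])
      have hc : Subgroup.centralizer (H : Set G) = Subgroup.center G := by
        rw [hHt, Subgroup.coe_top, Subgroup.centralizer_univ]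
      rw [← hc, hj]
    have hile2 : i ≤ 2 := by omega
    interval_cases i
    · -- i = 0
      have hz := hZeq_of_i0 rfl
      rw [hZ3] at hz
      have := Nat.pow_right_injective hp.two_le hz
      omega
    · -- i = 1
      rcases Nat.lt_or_ge j 1 with hj0 | hj1
      · -- j = 0 : center index divides p
        have hd := hZdvd_of_j0 (by omega)
        rw [pow_one] at hd
        exact hZdvd hd
      · -- j = 1 (since i + j ≤ 2)
        have hj1' : j = 1 := by omega
        rw [pow_one] at hi
        rw [hj1', pow_one] at hj
        set C := Subgroup.centralizer (H : Set G) with hCdef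
        by_cases hCH : C ≤ H
        · have he : C = H := aux_eq_of_le_of_index_eq hCH (by rw [hi, hj])
          have hH_ab : IsMulCommutative H :=
            Subgroup.le_centralizer_iff_isMulCommutative.mp (le_of_eq he.symm)
          exact hnoA2 ⟨H, hH_ab, hi⟩
        · have htop : H ⊔ C = ⊤ := aux_sup_eq_top hp hi hCH
          have hZle : H ⊓ C ≤ Subgroup.center G := aux_inf_le_center H htop
          refine hp3ne ?_
          calc p ^ 3 = (Subgroup.center G).index := hZ3.symm
            _ ≤ (H ⊓ C).index := Nat.le_of_dvd (hApos _) (Subgroup.index_dvd_of_le hZle)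
            _ ≤ H.index * C.index := Subgroup.index_inf_le
            _ = p ^ 2 := by rw [hi, hj]; ring
    · -- i = 2, so j = 0
      have hz := hZdvd_of_j0 (by omega)
      rw [hZ3] at hz
      refine hp3ne (Nat.le_of_dvd ?_ hz)
      exact pow_pos hp.pos 2
end
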